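/- arXiv:1503.08942 — 2 statements merged into one kernel-verified Lean document; each statement's English description precedes it below -/
import Mathlib

section
/- Let x, z ∈ Sₙ. Then x ≤ z in the Bruhat order if and only if for every i ∈ {1,…,n} and every j ∈ {1,…,n}, the number of indices k ≤ i with x(k) ≤ j is greater than or equal to the number of indices k ≤ i with z(k) ≤ j. -/
open Equiv

/-! ### Permutations: adjacent transpositions, Coxeter length, Bruhat order -/

/-- `s` is an adjacent transposition `(i, i+1)` in `S_n` (values `0`-indexed). -/
def IsAdjTrans {n : ℕ} (s : Perm (Fin n)) : Prop :=
  ∃ (i : ℕ) (h : i + 1 < n), s = Equiv.swap ⟨i, Nat.lt_of_succ_lt h⟩ ⟨i + 1, h⟩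

/-- Coxeter length: the minimal number of adjacent transpositions in a factorization. -/
noncomputable def permLength {n : ℕ} (x : Perm (Fin n)) : ℕ :=
  sInf {k | ∃ l : List (Perm (Fin n)), l.length = k ∧ (∀ s ∈ l, IsAdjTrans s) ∧ l.prod = x}

/-- Strict Bruhat order: generated by `u < t * u` for transpositions `t`
increasing the length. -/
def BruhatLT {n : ℕ} (x z : Perm (Fin n)) : Prop :=
  Relation.TransGen
    (fun u v => ∃ t : Perm (Fin n), t.IsSwap ∧ v = t * u ∧ permLength u < permLength v) x z

/-- Bruhat order (reflexive version). -/
def BruhatLE {n : ℕ} (x z : Perm (Fin n)) : Prop := x = z ∨ BruhatLT x z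

/-! ### Partitions -/

/-- A partition: an antitone, finitely supported function `ℕ → ℕ`
(the part `αᵢ` of the paper is `f (i-1)`; rows are `0`-indexed). -/
structure Partn where
  f : ℕ → ℕ
  antitone' : Antitone f
  finite_supp : ∃ N, ∀ i, N ≤ i → f i = 0

/-- `p` is a partition of `n`. -/
def PartnOf (p : Partn) (n : ℕ) : Prop :=
  ∃ N, (∀ i, N ≤ i → p.f i = 0) ∧ ∑ i ∈ Finset.range N, p.f i = n

/-- The partial sum `α₁ + ⋯ + α_j` of the first `j` parts. -/
def psum (p : Partn) (j : ℕ) : ℕ := ∑ i ∈ Finset.range j, p.f i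

/-- The set of block boundaries `α₁, α₁+α₂, …` (`1`-indexed positions). -/
def Bdry (p : Partn) : Set ℕ := {m | ∃ j, 1 ≤ j ∧ m = psum p j}

/-- `S^α`: permutations whose values within each block of `α` occur in increasing
order of position.  Values are `0`-indexed: value `v` is the paper's value `v+1`,
and `v`, `v+1` lie in the same block iff `v+1 ∉ Bdry α`. -/
def SAset (α : Partn) {n : ℕ} (x : Perm (Fin n)) : Prop :=
  ∀ (v : ℕ) (h : v + 1 < n), (v + 1) ∉ Bdry α →
    x⁻¹ ⟨v, Nat.lt_of_succ_lt h⟩ < x⁻¹ ⟨v + 1, h⟩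

/-- Containment of partitions. -/
def PartnSub (γ β : Partn) : Prop := ∀ i, γ.f i ≤ β.f i

/-- The transpose (conjugate) partition: `β'_j = #{i : βᵢ ≥ j}` (columns `0`-indexed). -/
noncomputable def ptranspose (p : Partn) (j : ℕ) : ℕ := Set.ncard {i | j < p.f i}

/-- `β∖γ` is a vertical strip: `βᵢ ≤ γᵢ + 1` for all `i`. -/
def VertStrip (β γ : Partn) : Prop := ∀ i, β.f i ≤ γ.f i + 1

/-- `β∖γ` is a horizontal strip: `β'∖γ'` is a vertical strip. -/
def HorizStrip (β γ : Partn) : Prop := ∀ j, ptranspose β j ≤ ptranspose γ j + 1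

/-- A rook strip is a horizontal and vertical strip. -/
def RookStrip (β γ : Partn) : Prop := VertStrip β γ ∧ HorizStrip β γ

/-- The boxes of the skew diagram `β∖γ` (row, column), `0`-indexed. -/
def SkewCells (β γ : Partn) : Set (ℕ × ℕ) := {c | γ.f c.1 ≤ c.2 ∧ c.2 < β.f c.1}

/-! ### Fillings of skew diagrams -/

/-- A filling of the skew diagram `β∖γ` with content `α`: each box gets an entry
`≥ 1`, and there are `α_u` entries equal to `u` (the paper's `αᵤ` is `α.f (u-1)`). -/
structure SkFilling (α β γ : Partn) where
  entry : ℕ × ℕ → ℕ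
  zero_outside : ∀ c, c ∉ SkewCells β γ → entry c = 0
  pos_inside : ∀ c ∈ SkewCells β γ, 1 ≤ entry c
  content : ∀ u : ℕ, 1 ≤ u → Set.ncard {c ∈ SkewCells β γ | entry c = u} = α.f (u - 1)

/-- The Littlewood–Richardson conditions: rows weakly increase, columns strictly
increase, and the lattice permutation property holds. -/
def IsLRF {α β γ : Partn} (F : SkFilling α β γ) : Prop :=
  (∀ i j j' : ℕ, (i, j) ∈ SkewCells β γ → (i, j') ∈ SkewCells β γ → j ≤ j' →
      F.entry (i, j) ≤ F.entry (i, j')) ∧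
  (∀ i i' j : ℕ, (i, j) ∈ SkewCells β γ → (i', j) ∈ SkewCells β γ → i < i' →
      F.entry (i, j) < F.entry (i', j)) ∧
  (∀ u c : ℕ, 2 ≤ u →
      Set.ncard {p ∈ SkewCells β γ | c ≤ p.2 ∧ F.entry p = u} ≤
      Set.ncard {p ∈ SkewCells β γ | c ≤ p.2 ∧ F.entry p = u - 1})

/-- Row `i` of the partition `γ⁽ᵘ⁾`: the boxes of `γ` together with the boxes of
`β∖γ` whose entry is at most `u`. -/
noncomputable def regionRow {α β γ : Partn} (F : SkFilling α β γ) (u i : ℕ) : ℕ :=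
  γ.f i + Set.ncard {j | (i, j) ∈ SkewCells β γ ∧ F.entry (i, j) ≤ u}

/-- Dominance order on fillings: `Z ≤_dom X` iff `δ⁽ᵘ⁾ ≤_dom γ⁽ᵘ⁾` for every `u`. -/
def DomLE {α β γ : Partn} (Z X : SkFilling α β γ) : Prop :=
  ∀ u j : ℕ, ∑ i ∈ Finset.range j, regionRow Z u i ≤ ∑ i ∈ Finset.range j, regionRow X u i

/-- A single sorting swap: exchange two out-of-order entries within a row
(left entry bigger) or within a column (upper entry bigger). -/
def SortSwap (β γ : Partn) (W Z : ℕ × ℕ → ℕ) : Prop :=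
  ∃ p q : ℕ × ℕ, p ∈ SkewCells β γ ∧ q ∈ SkewCells β γ ∧
    ((p.1 = q.1 ∧ p.2 < q.2) ∨ (p.2 = q.2 ∧ p.1 < q.1)) ∧
    W q < W p ∧
    Z = Function.update (Function.update W p (W q)) q (W p)

/-- `Z` is obtained from `X` by a decreasing box move: two entries of `X` are
exchanged so that the smaller entry is in the lower position after the exchange,
and then rows and columns are re-sorted if necessary. -/
def BoxMove {α β γ : Partn} (X Z : SkFilling α β γ) : Prop :=
  ∃ p q : ℕ × ℕ, p ∈ SkewCells β γ ∧ q ∈ SkewCells β γ ∧ p.1 < q.1 ∧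
    X.entry p < X.entry q ∧
    Relation.ReflTransGen (SortSwap β γ)
      (Function.update (Function.update X.entry p (X.entry q)) q (X.entry p)) Z.entry

/-- The box order on LR-fillings: generated by decreasing box moves. -/
def LeBox {α β γ : Partn} (Z X : SkFilling α β γ) : Prop :=
  Relation.ReflTransGen (fun Y W => IsLRF Y ∧ IsLRF W ∧ BoxMove W Y) Z X

/-! ### Reading words and standardization -/

/-- The block (paper entry, `1`-indexed) containing the `0`-indexed value `v`. -/
noncomputable def blockIdx (α : Partn) (v : ℕ) : ℕ := sInf {u | v < psum α u}

/-- `e` enumerates the boxes of the rook strip `β∖γ` from top right to bottom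
left, i.e. in increasing order of rows. -/
def IsRowRead (β γ : Partn) {n : ℕ} (e : Fin n → ℕ × ℕ) : Prop :=
  (∀ k, e k ∈ SkewCells β γ) ∧ Function.Injective e ∧
  (∀ c ∈ SkewCells β γ, ∃ k, e k = c) ∧
  ∀ k l : Fin n, k < l → (e k).1 < (e l).1

/-- `e` enumerates the boxes of `β∖γ` column by column from left to right, each
column read from bottom to top (the reading order of the word `ω`). -/
def IsColRead (β γ : Partn) {n : ℕ} (e : Fin n → ℕ × ℕ) : Prop :=
  (∀ k, e k ∈ SkewCells β γ) ∧ Function.Injective e ∧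
  (∀ c ∈ SkewCells β γ, ∃ k, e k = c) ∧
  ∀ k l : Fin n, k < l →
    (e k).2 < (e l).2 ∨ ((e k).2 = (e l).2 ∧ (e l).1 < (e k).1)

/-- `p` is the standardization `π(F)` of the reading word of the filling `F`
with respect to the reading enumeration `e`: position `k` receives a value in the
block corresponding to the entry of the `k`-th box, and equal entries receive
their values in reading order. -/
def IsStdOf (α : Partn) {β γ : Partn} {n : ℕ} (F : SkFilling α β γ)
    (e : Fin n → ℕ × ℕ) (p : Perm (Fin n)) : Prop :=
  (∀ k : Fin n, blockIdx α (p k) = F.entry (e k)) ∧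
  ∀ k l : Fin n, k < l → F.entry (e k) = F.entry (e l) → p k < p l

/-- The `α`-recording tableau of `x` is standard: the entries `x⁻¹(psum α u + j)`
increase along rows and down columns of the shape `α` (rows `0`-indexed). -/
def RecStd (α : Partn) {n : ℕ} (x : Perm (Fin n)) : Prop :=
  (∀ u j j' : ℕ, j < j' → j' < α.f u →
    ∀ (h : psum α u + j < n) (h' : psum α u + j' < n),
      x⁻¹ ⟨psum α u + j, h⟩ < x⁻¹ ⟨psum α u + j', h'⟩) ∧
  (∀ u u' j : ℕ, u < u' → j < α.f u' →
    ∀ (h : psum α u + j < n) (h' : psum α u' + j < n),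
      x⁻¹ ⟨psum α u + j, h⟩ < x⁻¹ ⟨psum α u' + j, h'⟩)

/-- Covering relation of the box order on LR-fillings. -/
def CovBox {α β γ : Partn} (X Y : SkFilling α β γ) : Prop :=
  IsLRF X ∧ IsLRF Y ∧ LeBox X Y ∧ X ≠ Y ∧
    ∀ W, IsLRF W → LeBox X W → LeBox W Y → W = X ∨ W = Y

/-- The decreasing block `(i, i-1, …, 1)`. -/
def descBlock (i : ℕ) : List ℕ := ((List.range i).reverse).map (· + 1)

namespace Stmt2Aux
set_option linter.unusedSectionVars false
open Finset
variable {n : ℕ}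

def invNum (x : Perm (Fin n)) : ℕ :=
  (Finset.univ.filter fun c : Fin n × Fin n => c.1 < c.2 ∧ x c.2 < x c.1).card

def phi (p q u v : Fin n) : Fin n × Fin n :=
  if v = p then (u, q)
  else if u = q then (p, v)
  else if u = p ∧ q < v then (q, v)
  else if v = q ∧ u < p then (u, p)
  else (u, v)

variable {p q u v : Fin n}

lemma phi_eval1 (h1 : v = p) : phi p q u v = (u, q) := by
  rw [phi, if_pos h1]
lemma phi_eval2 (h1 : v ≠ p) (h2 : u = q) : phi p q u v = (p, v) := by
  rw [phi, if_neg h1, if_pos h2]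
lemma phi_eval3 (h1 : v ≠ p) (h2 : u ≠ q) (h3 : u = p ∧ q < v) : phi p q u v = (q, v) := by
  rw [phi, if_neg h1, if_neg h2, if_pos h3]
lemma phi_eval4 (h1 : v ≠ p) (h2 : u ≠ q) (h3 : ¬(u = p ∧ q < v)) (h4 : v = q ∧ u < p) :
    phi p q u v = (u, p) := by
  rw [phi, if_neg h1, if_neg h2, if_neg h3, if_pos h4]
lemma phi_eval5 (h1 : v ≠ p) (h2 : u ≠ q) (h3 : ¬(u = p ∧ q < v)) (h4 : ¬(v = q ∧ u < p)) :
    phi p q u v = (u, v) := by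
  rw [phi, if_neg h1, if_neg h2, if_neg h3, if_neg h4]

lemma phi_invol (hpq : p < q) (huv : u < v) :
    phi p q (phi p q u v).1 (phi p q u v).2 = (u, v) := by
  by_cases h1 : v = p
  · have hup : u < p := h1 ▸ huv
    rw [phi_eval1 h1]
    rw [phi_eval4 (fun h => absurd h hpq.ne') (ne_of_lt (hup.trans hpq))
      (fun h => absurd h.2 (lt_irrefl q)) ⟨rfl, hup⟩, h1]
  · by_cases h2 : u = q
    · have hqv : q < v := h2 ▸ huv
      rw [phi_eval2 h1 h2]
      rw [phi_eval3 h1 hpq.ne ⟨rfl, hqv⟩, h2]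
    · by_cases h3 : u = p ∧ q < v
      · rw [phi_eval3 h1 h2 h3]
        rw [phi_eval2 h1 rfl, h3.1]
      · by_cases h4 : v = q ∧ u < p
        · rw [phi_eval4 h1 h2 h3 h4]
          rw [phi_eval1 rfl, h4.1]
        · rw [phi_eval5 h1 h2 h3 h4, phi_eval5 h1 h2 h3 h4]

section Mem
variable (hpq : p < q) (x : Perm (Fin n)) (hx : x p < x q)

lemma ymul_p : (x * Equiv.swap p q) p = x q := by
  simp [Equiv.Perm.mul_apply, Equiv.swap_apply_left]
lemma ymul_q : (x * Equiv.swap p q) q = x p := by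
  simp [Equiv.Perm.mul_apply, Equiv.swap_apply_right]
lemma ymul_other {k : Fin n} (h1 : k ≠ p) (h2 : k ≠ q) : (x * Equiv.swap p q) k = x k := by
  simp [Equiv.Perm.mul_apply, Equiv.swap_apply_of_ne_of_ne h1 h2]

include hpq hx in
lemma phi_mem_fwd (huv : u < v) (hinv : x v < x u) :
    (phi p q u v).1 < (phi p q u v).2 ∧
      (x * Equiv.swap p q) (phi p q u v).2 < (x * Equiv.swap p q) (phi p q u v).1 ∧
      phi p q u v ≠ (p, q) := by
  by_cases h1 : v = p
  · have hup : u < p := h1 ▸ huv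
    rw [phi_eval1 h1]
    refine ⟨hup.trans hpq, ?_, ?_⟩
    · rw [ymul_q, ymul_other x hup.ne (ne_of_lt (hup.trans hpq))]
      exact h1 ▸ hinv
    · intro h; exact hup.ne (congrArg Prod.fst h)
  · by_cases h2 : u = q
    · have hqv : q < v := h2 ▸ huv
      rw [phi_eval2 h1 h2]
      refine ⟨hpq.trans hqv, ?_, ?_⟩
      · rw [ymul_p, ymul_other x h1 (ne_of_gt hqv)]
        exact h2 ▸ hinv
      · intro h; exact (ne_of_gt hqv) (congrArg Prod.snd h)
    · by_cases h3 : u = p ∧ q < v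
      · rw [phi_eval3 h1 h2 h3]
        refine ⟨h3.2, ?_, ?_⟩
        · rw [ymul_q, ymul_other x h1 (ne_of_gt h3.2)]
          exact h3.1 ▸ hinv
        · intro h; exact hpq.ne' (congrArg Prod.fst h)
      · by_cases h4 : v = q ∧ u < p
        · rw [phi_eval4 h1 h2 h3 h4]
          refine ⟨h4.2, ?_, ?_⟩
          · rw [ymul_p, ymul_other x h4.2.ne (ne_of_lt (h4.2.trans hpq))]
            exact h4.1 ▸ hinv
          · intro h; exact h4.2.ne (congrArg Prod.fst h)
        · rw [phi_eval5 h1 h2 h3 h4]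
          by_cases hup : u = p
          · have hvq : v ≠ q := by
              intro hvq
              rw [hup, hvq] at hinv
              exact absurd hx (asymm hinv)
            refine ⟨huv, ?_, ?_⟩
            · rw [ymul_other x h1 hvq, hup, ymul_p]
              exact (hup ▸ hinv).trans hx
            · intro h; exact hvq (congrArg Prod.snd h)
          · by_cases hvq : v = q
            · have hpu : p < u := by
                rcases lt_or_gt_of_ne (Ne.symm hup) with h | h
                · exact h
                · exact absurd ⟨hvq, h⟩ h4
              refine ⟨huv, ?_, ?_⟩
              · rw [ymul_other x hup h2, hvq, ymul_q]
                exact hx.trans (hvq ▸ hinv)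
              · intro h; exact hup (congrArg Prod.fst h)
            · refine ⟨huv, ?_, ?_⟩
              · rw [ymul_other x hup h2, ymul_other x h1 hvq]
                exact hinv
              · intro h; exact hup (congrArg Prod.fst h)

include hpq hx in
lemma phi_mem_bwd (hadj : (x q : ℕ) = (x p : ℕ) + 1) (huv : u < v)
    (hinv : (x * Equiv.swap p q) v < (x * Equiv.swap p q) u) (hne : (u, v) ≠ (p, q)) :
    (phi p q u v).1 < (phi p q u v).2 ∧ x (phi p q u v).2 < x (phi p q u v).1 := by
  by_cases h1 : v = p
  · have hup : u < p := h1 ▸ huv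
    rw [ymul_other x hup.ne (ne_of_lt (hup.trans hpq))] at hinv
    rw [h1, ymul_p] at hinv
    rw [phi_eval1 h1]
    exact ⟨hup.trans hpq, hinv⟩
  · by_cases h2 : u = q
    · have hqv : q < v := h2 ▸ huv
      rw [ymul_other x h1 (ne_of_gt hqv), h2, ymul_q] at hinv
      rw [phi_eval2 h1 h2]
      exact ⟨hpq.trans hqv, hinv⟩
    · by_cases h3 : u = p ∧ q < v
      · rw [ymul_other x h1 (ne_of_gt h3.2), h3.1, ymul_p] at hinv
        rw [phi_eval3 h1 h2 h3]
        exact ⟨h3.2, hinv⟩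
      · by_cases h4 : v = q ∧ u < p
        · rw [ymul_other x h4.2.ne (ne_of_lt (h4.2.trans hpq)), h4.1, ymul_q] at hinv
          rw [phi_eval4 h1 h2 h3 h4]
          exact ⟨h4.2, hinv⟩
        · rw [phi_eval5 h1 h2 h3 h4]
          by_cases hup : u = p
          · have hvq : v ≠ q := by
              intro hvq; exact hne (by rw [hup, hvq])
            have hvlt : v < q := by
              rcases lt_or_gt_of_ne hvq with h | h
              · exact h
              · exact absurd ⟨hup, h⟩ h3
            rw [ymul_other x h1 hvq, hup, ymul_p] at hinv
            refine ⟨huv, ?_⟩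
            rw [hup]
            have hne' : x v ≠ x p := fun h => h1 (x.injective h)
            have : (x v : ℕ) < (x p : ℕ) + 1 := hadj ▸ hinv
            have : (x v : ℕ) ≤ (x p : ℕ) := Nat.lt_succ_iff.mp this
            exact lt_of_le_of_ne (by exact_mod_cast this) hne'
          · by_cases hvq : v = q
            · have hpu : p < u := by
                rcases lt_or_gt_of_ne (Ne.symm hup) with h | h
                · exact h
                · exact absurd ⟨hvq, h⟩ h4
              rw [ymul_other x hup h2, hvq, ymul_q] at hinv
              refine ⟨huv, ?_⟩
              rw [hvq]
              have hne' : x u ≠ x q := fun h => h2 (x.injective h)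
              have h5 : (x p : ℕ) < (x u : ℕ) := hinv
              have : (x q : ℕ) ≤ (x u : ℕ) := by omega
              exact lt_of_le_of_ne (by exact_mod_cast this) (Ne.symm hne')
            · rw [ymul_other x hup h2, ymul_other x h1 hvq] at hinv
              exact ⟨huv, hinv⟩

end Mem
section Card
variable (hpq : p < q) (x : Perm (Fin n)) (hx : x p < x q)

include hpq hx in
lemma invNum_lt : invNum x < invNum (x * Equiv.swap p q) := by
  classical
  set y := x * Equiv.swap p q with hy
  set Ix := (Finset.univ.filter fun c : Fin n × Fin n => c.1 < c.2 ∧ x c.2 < x c.1) with hIx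
  set Iy := (Finset.univ.filter fun c : Fin n × Fin n => c.1 < c.2 ∧ y c.2 < y c.1) with hIy
  have hpq_mem : (p, q) ∈ Iy := by
    rw [hIy, mem_filter]
    refine ⟨mem_univ _, hpq, ?_⟩
    rw [hy, ymul_p, ymul_q]
    exact hx
  have hmaps : ∀ c ∈ Ix, phi p q c.1 c.2 ∈ Iy.erase (p, q) := by
    rintro ⟨a, b⟩ hc
    rw [hIx, mem_filter] at hc
    obtain ⟨-, h1, h2⟩ := hc
    obtain ⟨g1, g2, g3⟩ := phi_mem_fwd hpq x hx h1 h2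
    rw [mem_erase, hIy, mem_filter]
    exact ⟨by simpa using g3, mem_univ _, g1, g2⟩
  have hinj : Set.InjOn (fun c : Fin n × Fin n => phi p q c.1 c.2) Ix := by
    rintro ⟨a, b⟩ ha ⟨a', b'⟩ hb heq
    simp only [Finset.mem_coe, hIx, mem_filter] at ha hb
    have e1 := phi_invol hpq ha.2.1
    have e2 := phi_invol hpq hb.2.1
    simp only at heq
    rw [← e1, ← e2, heq]
  have hcard : Ix.card ≤ (Iy.erase (p, q)).card :=
    Finset.card_le_card_of_injOn _ hmaps hinj
  have h1 : (Iy.erase (p, q)).card = Iy.card - 1 := Finset.card_erase_of_mem hpq_mem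
  have h2 : 0 < Iy.card := Finset.card_pos.mpr ⟨_, hpq_mem⟩
  show Ix.card < Iy.card
  omega

include hpq hx in
lemma invNum_adj (hadj : (x q : ℕ) = (x p : ℕ) + 1) :
    invNum (x * Equiv.swap p q) = invNum x + 1 := by
  classical
  have hlt := invNum_lt hpq x hx
  set y := x * Equiv.swap p q with hy
  set Ix := (Finset.univ.filter fun c : Fin n × Fin n => c.1 < c.2 ∧ x c.2 < x c.1) with hIx
  set Iy := (Finset.univ.filter fun c : Fin n × Fin n => c.1 < c.2 ∧ y c.2 < y c.1) with hIy
  have hpq_mem : (p, q) ∈ Iy := by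
    rw [hIy, mem_filter]
    refine ⟨mem_univ _, hpq, ?_⟩
    rw [hy, ymul_p, ymul_q]
    exact hx
  have hmaps : ∀ c ∈ Iy.erase (p, q), phi p q c.1 c.2 ∈ Ix := by
    rintro ⟨a, b⟩ hc
    rw [mem_erase, hIy, mem_filter] at hc
    obtain ⟨hne, -, h1, h2⟩ := hc
    obtain ⟨g1, g2⟩ := phi_mem_bwd hpq x hx hadj h1 h2 hne
    rw [hIx, mem_filter]
    exact ⟨mem_univ _, g1, g2⟩
  have hinj : Set.InjOn (fun c : Fin n × Fin n => phi p q c.1 c.2) (Iy.erase (p, q)) := by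
    rintro ⟨a, b⟩ ha ⟨a', b'⟩ hb heq
    simp only [Finset.mem_coe, mem_erase, hIy, mem_filter] at ha hb
    have e1 := phi_invol hpq ha.2.2.1
    have e2 := phi_invol hpq hb.2.2.1
    simp only at heq
    rw [← e1, ← e2, heq]
  have hcard : (Iy.erase (p, q)).card ≤ Ix.card :=
    Finset.card_le_card_of_injOn _ hmaps hinj
  have h1 : (Iy.erase (p, q)).card = Iy.card - 1 := Finset.card_erase_of_mem hpq_mem
  have h2 : 0 < Iy.card := Finset.card_pos.mpr ⟨_, hpq_mem⟩
  have : Ix.card < Iy.card := hlt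
  show Iy.card = Ix.card + 1
  omega

end Card
lemma swap_mul_eq (x : Perm (Fin n)) (a b : Fin n) :
    Equiv.swap a b * x = x * Equiv.swap (x⁻¹ a) (x⁻¹ b) := by
  have h := Equiv.swap_apply_apply x (x⁻¹ a) (x⁻¹ b)
  rw [show x (x⁻¹ a) = a from x.apply_symm_apply a, show x (x⁻¹ b) = b from x.apply_symm_apply b] at h
  rw [h, mul_assoc, mul_assoc, inv_mul_cancel, mul_one]

lemma invNum_one : invNum (1 : Perm (Fin n)) = 0 := by
  rw [invNum, Finset.card_eq_zero, Finset.filter_eq_empty_iff]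
  rintro ⟨a, b⟩ -
  simp only [Equiv.Perm.one_apply]
  rintro ⟨h1, h2⟩
  exact absurd h1 (asymm h2)

/-- dichotomy for multiplying by an adjacent transposition -/
lemma adj_dichotomy (i : ℕ) (h : i + 1 < n) (x : Perm (Fin n)) :
    (x⁻¹ ⟨i, Nat.lt_of_succ_lt h⟩ < x⁻¹ ⟨i + 1, h⟩ →
      invNum (Equiv.swap ⟨i, Nat.lt_of_succ_lt h⟩ ⟨i + 1, h⟩ * x) = invNum x + 1) ∧
    (x⁻¹ ⟨i + 1, h⟩ < x⁻¹ ⟨i, Nat.lt_of_succ_lt h⟩ →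
      invNum x = invNum (Equiv.swap ⟨i, Nat.lt_of_succ_lt h⟩ ⟨i + 1, h⟩ * x) + 1) := by
  set a : Fin n := ⟨i, Nat.lt_of_succ_lt h⟩ with ha
  set b : Fin n := ⟨i + 1, h⟩ with hb
  set p := x⁻¹ a with hp
  set q := x⁻¹ b with hq
  have hxp : x p = a := x.apply_symm_apply a
  have hxq : x q = b := x.apply_symm_apply b
  have hmul : Equiv.swap a b * x = x * Equiv.swap p q := swap_mul_eq x a b
  constructor
  · intro hpq
    rw [hmul]
    apply invNum_adj hpq x
    · rw [hxp, hxq]; exact Fin.mk_lt_mk.mpr (Nat.lt_succ_self i)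
    · rw [hxp, hxq]
  · intro hqp
    set y := x * Equiv.swap p q with hy
    have hyq : y q = a := by rw [hy, Equiv.Perm.mul_apply, Equiv.swap_apply_right, hxp]
    have hyp : y p = b := by rw [hy, Equiv.Perm.mul_apply, Equiv.swap_apply_left, hxq]
    have key : invNum (y * Equiv.swap q p) = invNum y + 1 := by
      apply invNum_adj hqp y
      · rw [hyq, hyp]; exact Fin.mk_lt_mk.mpr (Nat.lt_succ_self i)
      · rw [hyq, hyp]
    have hyy : y * Equiv.swap q p = x := by
      rw [hy, Equiv.swap_comm q p, mul_assoc, Equiv.swap_mul_self, mul_one]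
    rw [hyy] at key
    rw [hmul]
    exact key

lemma invNum_adjmul_le (s : Perm (Fin n)) (hs : IsAdjTrans s) (x : Perm (Fin n)) :
    invNum (s * x) ≤ invNum x + 1 := by
  obtain ⟨i, h, rfl⟩ := hs
  obtain ⟨h1, h2⟩ := adj_dichotomy i h x
  rcases lt_or_gt_of_ne (show x⁻¹ ⟨i, Nat.lt_of_succ_lt h⟩ ≠ x⁻¹ ⟨i + 1, h⟩ from
    fun hc => by
      have := x⁻¹.injective hc
      simp only [Fin.mk.injEq] at this
      omega) with hlt | hgt
  · rw [h1 hlt]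
  · rw [h2 hgt]; omega

lemma invNum_prod_le (l : List (Perm (Fin n))) (hl : ∀ s ∈ l, IsAdjTrans s) :
    invNum l.prod ≤ l.length := by
  induction l with
  | nil => simp [invNum_one]
  | cons s l ih =>
    rw [List.prod_cons, List.length_cons]
    have h1 := invNum_adjmul_le s (hl s (by simp)) l.prod
    have h2 := ih (fun t ht => hl t (by simp [ht]))
    omega

lemma eq_one_of_invNum_zero (x : Perm (Fin n)) (hx : invNum x = 0) : x = 1 := by
  have hmono : StrictMono x := by
    intro a b hab
    rcases lt_trichotomy (x a) (x b) with h | h | h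
    · exact h
    · exact absurd (x.injective h) (ne_of_lt hab)
    · exfalso
      rw [invNum, Finset.card_eq_zero, Finset.filter_eq_empty_iff] at hx
      exact hx (Finset.mem_univ (a, b)) ⟨hab, h⟩
  have hrange : Set.range x = Set.range (id : Fin n → Fin n) := by
    rw [Set.range_id]
    exact Set.range_eq_univ.mpr x.surjective
  have hwf : WellFoundedLT (Fin n) := inferInstance
  have := (StrictMono.range_inj hmono (strictMono_id : StrictMono (id : Fin n → Fin n))).mp hrange
  ext k
  rw [show ⇑x = id from this]
  simp

lemma exists_descent (x : Perm (Fin n)) (hx : x ≠ 1) :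
    ∃ (i : ℕ) (h : i + 1 < n), x⁻¹ ⟨i + 1, h⟩ < x⁻¹ ⟨i, Nat.lt_of_succ_lt h⟩ := by
  by_contra hcon
  push_neg at hcon
  apply hx
  have hmono : StrictMono (⇑x⁻¹) := by
    cases n with
    | zero => intro a; exact absurd a.2 (by omega)
    | succ m =>
      rw [Fin.strictMono_iff_lt_succ]
      intro i
      have h2 : (i : ℕ) + 1 < m + 1 := by omega
      have := hcon i h2
      have hne : x⁻¹ (Fin.castSucc i) ≠ x⁻¹ i.succ := by
        intro hc
        have := x⁻¹.injective hc
        have : (Fin.castSucc i : Fin (m+1)) = i.succ := this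
        simp [Fin.ext_iff] at this
      rcases lt_or_gt_of_ne hne with h | h
      · exact h
      · exfalso
        have e1 : (⟨(i:ℕ)+1, h2⟩ : Fin (m+1)) = i.succ := by simp [Fin.ext_iff]
        have e2 : (⟨(i:ℕ), Nat.lt_of_succ_lt h2⟩ : Fin (m+1)) = Fin.castSucc i := by
          simp [Fin.ext_iff]
        rw [e1, e2] at this
        exact absurd this (not_le.mpr h)
  have hrange : Set.range (⇑x⁻¹) = Set.range (id : Fin n → Fin n) := by
    rw [Set.range_id]
    exact Set.range_eq_univ.mpr x⁻¹.surjective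
  have hwf : WellFoundedLT (Fin n) := inferInstance
  have hid := (StrictMono.range_inj hmono (strictMono_id : StrictMono (id : Fin n → Fin n))).mp hrange
  have hx1 : x⁻¹ = 1 := by
    ext k
    rw [show ⇑x⁻¹ = id from hid]
    simp
  rw [← inv_inv x, hx1]
  simp

lemma exists_word (x : Perm (Fin n)) :
    ∃ l : List (Perm (Fin n)), l.length = invNum x ∧ (∀ s ∈ l, IsAdjTrans s) ∧ l.prod = x := by
  suffices H : ∀ (k : ℕ) (x : Perm (Fin n)), invNum x = k →
      ∃ l : List (Perm (Fin n)), l.length = k ∧ (∀ s ∈ l, IsAdjTrans s) ∧ l.prod = x from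
    H (invNum x) x rfl
  intro k
  induction k using Nat.strong_induction_on with
  | _ k ih =>
    intro x hx
    by_cases hx1 : x = 1
    · subst hx1
      rw [invNum_one] at hx
      exact ⟨[], by simp [← hx]⟩
    · obtain ⟨i, h, hdesc⟩ := exists_descent x hx1
      set s := Equiv.swap (⟨i, Nat.lt_of_succ_lt h⟩ : Fin n) ⟨i + 1, h⟩ with hs
      set y := s * x with hy
      have hxy : x = s * y := by
        rw [hy, ← mul_assoc, hs, Equiv.swap_mul_self, one_mul]
      have hyinv : ∀ (c : Fin n), y⁻¹ c = x⁻¹ (s c) := by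
        intro c
        rw [hy, mul_inv_rev, Equiv.Perm.mul_apply, hs, Equiv.swap_inv]
      have hkey : invNum x = invNum y + 1 := by
        have := (adj_dichotomy i h y).1
        rw [← hs, ← hxy] at this
        apply this
        rw [hyinv, hyinv, hs, Equiv.swap_apply_left, Equiv.swap_apply_right]
        exact hdesc
      have hyk : invNum y = k - 1 := by omega
      have hklt : k - 1 < k := by omega
      obtain ⟨l, hl1, hl2, hl3⟩ := ih (k - 1) hklt y hyk
      refine ⟨s :: l, ?_, ?_, ?_⟩
      · simp only [List.length_cons, hl1]; omega
      · intro t ht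
        rcases List.mem_cons.mp ht with h' | h'
        · rw [h', hs]; exact ⟨i, h, rfl⟩
        · exact hl2 t h'
      · rw [List.prod_cons, hl3, ← hxy]

lemma permLength_eq_invNum (x : Perm (Fin n)) : permLength x = invNum x := by
  apply le_antisymm
  · obtain ⟨l, hl1, hl2, hl3⟩ := exists_word x
    exact Nat.sInf_le ⟨l, hl1, hl2, hl3⟩
  · apply le_csInf
    · obtain ⟨l, hl1, hl2, hl3⟩ := exists_word x
      exact ⟨invNum x, l, hl1, hl2, hl3⟩
    · rintro b ⟨l, hl1, hl2, hl3⟩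
      rw [← hl3, ← hl1]
      exact invNum_prod_le l hl2

def dm (x : Perm (Fin n)) (i j : Fin n) : ℕ :=
  (Finset.univ.filter fun k : Fin n => k ≤ i ∧ x k ≤ j).card

lemma ymul_p' (x : Perm (Fin n)) : (x * Equiv.swap p q) p = x q := by
  simp [Equiv.Perm.mul_apply, Equiv.swap_apply_left]
lemma ymul_q' (x : Perm (Fin n)) : (x * Equiv.swap p q) q = x p := by
  simp [Equiv.Perm.mul_apply, Equiv.swap_apply_right]
lemma ymul_other' (x : Perm (Fin n)) {k : Fin n} (h1 : k ≠ p) (h2 : k ≠ q) :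
    (x * Equiv.swap p q) k = x k := by
  simp [Equiv.Perm.mul_apply, Equiv.swap_apply_of_ne_of_ne h1 h2]

lemma dm_mul_swap (hpq : p < q) (x : Perm (Fin n)) (hx : x p < x q) (r s : Fin n) :
    (p ≤ r ∧ r < q ∧ x p ≤ s ∧ s < x q → dm (x * Equiv.swap p q) r s + 1 = dm x r s)
    ∧ (¬(p ≤ r ∧ r < q ∧ x p ≤ s ∧ s < x q) → dm (x * Equiv.swap p q) r s = dm x r s) := by
  classical
  set y := x * Equiv.swap p q with hy
  rcases le_or_gt q r with hqr | hrq
  · -- q ≤ r : cardinalities equal via the swap bijection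
    have hswle : ∀ j : Fin n, j ≤ r → Equiv.swap p q j ≤ r := by
      intro j hj
      by_cases h1 : j = p
      · rw [h1, Equiv.swap_apply_left]; exact hqr
      · by_cases h2 : j = q
        · rw [h2, Equiv.swap_apply_right]; exact (hpq.le.trans hqr)
        · rw [Equiv.swap_apply_of_ne_of_ne h1 h2]; exact hj
    have himg : (Finset.univ.filter fun k : Fin n => k ≤ r ∧ y k ≤ s)
        = (Finset.univ.filter fun k : Fin n => k ≤ r ∧ x k ≤ s).image (Equiv.swap p q) := by
      ext j
      simp only [mem_image, mem_filter, mem_univ, true_and]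
      constructor
      · intro ⟨hj, hyj⟩
        refine ⟨Equiv.swap p q j, ⟨hswle j hj, ?_⟩, Equiv.swap_apply_self p q j⟩
        rw [hy, Equiv.Perm.mul_apply] at hyj
        exact hyj
      · rintro ⟨k, ⟨hk, hxk⟩, rfl⟩
        refine ⟨hswle k hk, ?_⟩
        rw [hy, Equiv.Perm.mul_apply, Equiv.swap_apply_self]
        exact hxk
    have heq : dm y r s = dm x r s := by
      rw [dm, dm, himg, Finset.card_image_of_injective _ (Equiv.injective _)]
    exact ⟨fun h => absurd h.2.1 (not_lt.mpr hqr), fun _ => heq⟩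
  · rcases lt_or_ge r p with hrp | hpr
    · have heq : dm y r s = dm x r s := by
        rw [dm, dm]
        congr 1
        ext j
        simp only [mem_filter, mem_univ, true_and]
        have : ∀ (hj : j ≤ r), y j = x j := fun hj =>
          ymul_other' x (ne_of_lt (lt_of_le_of_lt hj hrp))
            (ne_of_lt (lt_of_le_of_lt hj (hrp.trans hpq)))
        constructor
        · intro ⟨h1, h2⟩; exact ⟨h1, (this h1) ▸ h2⟩
        · intro ⟨h1, h2⟩; exact ⟨h1, (this h1) ▸ h2⟩
      exact ⟨fun h => absurd h.1 (not_le.mpr hrp), fun _ => heq⟩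
    · rcases lt_or_ge s (x p) with hs1 | hs2
      · have heq : dm y r s = dm x r s := by
          rw [dm, dm]
          congr 1
          ext j
          simp only [mem_filter, mem_univ, true_and]
          constructor
          · intro ⟨h1, h2⟩
            by_cases hjp : j = p
            · exfalso
              rw [hjp, ymul_p' x] at h2
              exact absurd (h2.trans_lt hs1) (not_lt.mpr (le_of_lt hx))
            · have hjq : j ≠ q := ne_of_lt (lt_of_le_of_lt h1 hrq)
              rw [ymul_other' x hjp hjq] at h2
              exact ⟨h1, h2⟩
          · intro ⟨h1, h2⟩
            by_cases hjp : j = p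
            · exact absurd ((hjp ▸ h2).trans_lt hs1) (lt_irrefl _)
            · have hjq : j ≠ q := ne_of_lt (lt_of_le_of_lt h1 hrq)
              rw [ymul_other' x hjp hjq]
              exact ⟨h1, h2⟩
        exact ⟨fun h => absurd hs1 (not_lt.mpr h.2.2.1), fun _ => heq⟩
      · rcases lt_or_ge s (x q) with hs3 | hs4
        · -- in the rectangle : dm y = dm x - 1
          have hkey : dm y r s + 1 = dm x r s := by
            have hErase : (Finset.univ.filter fun k : Fin n => k ≤ r ∧ y k ≤ s)
                = (Finset.univ.filter fun k : Fin n => k ≤ r ∧ x k ≤ s).erase p := by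
              ext j
              simp only [mem_erase, mem_filter, mem_univ, true_and]
              constructor
              · intro ⟨h1, h2⟩
                have hjp : j ≠ p := by
                  intro hc
                  rw [hc, ymul_p' x] at h2
                  exact absurd h2 (not_le.mpr hs3)
                have hjq : j ≠ q := ne_of_lt (lt_of_le_of_lt h1 hrq)
                rw [ymul_other' x hjp hjq] at h2
                exact ⟨hjp, h1, h2⟩
              · intro ⟨hjp, h1, h2⟩
                have hjq : j ≠ q := ne_of_lt (lt_of_le_of_lt h1 hrq)
                rw [ymul_other' x hjp hjq]
                exact ⟨h1, h2⟩
            have hpmem : p ∈ (Finset.univ.filter fun k : Fin n => k ≤ r ∧ x k ≤ s) := by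
              simp only [mem_filter, mem_univ, true_and]
              exact ⟨hpr, hs2⟩
            rw [dm, dm, hErase, Finset.card_erase_of_mem hpmem]
            have := Finset.card_pos.mpr ⟨p, hpmem⟩
            omega
          exact ⟨fun _ => hkey, fun h => absurd ⟨hpr, hrq, hs2, hs3⟩ h⟩
        · have heq : dm y r s = dm x r s := by
            rw [dm, dm]
            congr 1
            ext j
            simp only [mem_filter, mem_univ, true_and]
            constructor
            · intro ⟨h1, h2⟩
              by_cases hjp : j = p
              · exact ⟨h1, by rw [hjp]; exact le_trans (le_of_lt hx) hs4⟩
              · have hjq : j ≠ q := ne_of_lt (lt_of_le_of_lt h1 hrq)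
                rw [ymul_other' x hjp hjq] at h2
                exact ⟨h1, h2⟩
            · intro ⟨h1, h2⟩
              by_cases hjp : j = p
              · subst hjp
                rw [ymul_p' x]
                exact ⟨h1, hs4⟩
              · have hjq : j ≠ q := ne_of_lt (lt_of_le_of_lt h1 hrq)
                rw [ymul_other' x hjp hjq]
                exact ⟨h1, h2⟩
          exact ⟨fun h => absurd h.2.2.2 (not_lt.mpr hs4), fun _ => heq⟩

lemma dm_mul_swap_le (hpq : p < q) (x : Perm (Fin n)) (hx : x p < x q) (r s : Fin n) :
    dm (x * Equiv.swap p q) r s ≤ dm x r s := by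
  obtain ⟨h1, h2⟩ := dm_mul_swap hpq x hx r s
  by_cases h : p ≤ r ∧ r < q ∧ x p ≤ s ∧ s < x q
  · omega
  · omega

/-- split a column count at an intermediate value -/
lemma dm_split (x : Perm (Fin n)) (r s b : Fin n) (hsb : s ≤ b) :
    dm x r b = dm x r s +
      (Finset.univ.filter fun k : Fin n => k ≤ r ∧ s < x k ∧ x k ≤ b).card := by
  classical
  rw [dm, dm, ← Finset.card_union_of_disjoint]
  · congr 1
    ext k
    simp only [mem_union, mem_filter, mem_univ, true_and]
    constructor
    · intro ⟨h1, h2⟩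
      rcases le_or_gt (x k) s with h | h
      · exact Or.inl ⟨h1, h⟩
      · exact Or.inr ⟨h1, h, h2⟩
    · intro h
      rcases h with ⟨h1, h2⟩ | ⟨h1, h2, h3⟩
      · exact ⟨h1, h2.trans hsb⟩
      · exact ⟨h1, h3⟩
  · rw [Finset.disjoint_left]
    intro k hk1 hk2
    simp only [mem_filter, mem_univ, true_and] at hk1 hk2
    exact absurd hk1.2 (not_le.mpr hk2.2.1)

/-- split off the last row -/
lemma dm_last (x : Perm (Fin n)) (i j : Fin n) :
    dm x i j = (Finset.univ.filter fun k : Fin n => k < i ∧ x k ≤ j).card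
      + (if x i ≤ j then 1 else 0) := by
  classical
  by_cases hcase : x i ≤ j
  · rw [if_pos hcase, dm]
    have : (Finset.univ.filter fun k : Fin n => k ≤ i ∧ x k ≤ j)
        = insert i (Finset.univ.filter fun k : Fin n => k < i ∧ x k ≤ j) := by
      ext k
      simp only [mem_insert, mem_filter, mem_univ, true_and]
      constructor
      · intro ⟨h1, h2⟩
        rcases lt_or_eq_of_le h1 with h | h
        · exact Or.inr ⟨h, h2⟩
        · exact Or.inl h
      · intro h
        rcases h with h | ⟨h1, h2⟩
        · exact ⟨le_of_eq h, h ▸ hcase⟩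
        · exact ⟨le_of_lt h1, h2⟩
    rw [this, Finset.card_insert_of_notMem (by simp)]
  · rw [if_neg hcase, dm, Nat.add_zero]
    congr 1
    ext k
    simp only [mem_filter, mem_univ, true_and]
    constructor
    · intro ⟨h1, h2⟩
      rcases lt_or_eq_of_le h1 with h | h
      · exact ⟨h, h2⟩
      · exact absurd (h ▸ h2) hcase
    · intro ⟨h1, h2⟩
      exact ⟨le_of_lt h1, h2⟩

lemma first_diff (x z : Perm (Fin n)) (hdom : ∀ r s, dm z r s ≤ dm x r s) (i : Fin n)
    (hagree : ∀ k, k < i → x k = z k) (hne : x i ≠ z i) : x i < z i := by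
  classical
  have hE : ∀ j, (Finset.univ.filter fun k : Fin n => k < i ∧ x k ≤ j).card
      = (Finset.univ.filter fun k : Fin n => k < i ∧ z k ≤ j).card := by
    intro j
    congr 1
    ext k
    simp only [mem_filter, mem_univ, true_and]
    constructor
    · intro ⟨h1, h2⟩; exact ⟨h1, hagree k h1 ▸ h2⟩
    · intro ⟨h1, h2⟩; exact ⟨h1, (hagree k h1).symm ▸ h2⟩
  have key : ∀ j, (if z i ≤ j then 1 else 0) ≤ (if x i ≤ j then (1:ℕ) else 0) := by
    intro j
    have h1 := hdom i j
    rw [dm_last, dm_last, hE j] at h1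
    omega
  have := key (z i)
  rw [if_pos (le_refl _)] at this
  have hle : x i ≤ z i := by
    by_contra hcon
    rw [if_neg hcon] at this
    omega
  exact lt_of_le_of_ne hle hne

lemma strict_step (x z : Perm (Fin n)) (hdom : ∀ r s, dm z r s ≤ dm x r s) (i m : Fin n)
    (him : i < m) (hagree : ∀ k, k < i → x k = z k) (hab : x i < z i)
    (hmin : ∀ k, i < k → k < m → ¬(x i < x k ∧ x k ≤ z i)) :
    ∀ r s, i ≤ r → r < m → x i ≤ s → s < z i → dm z r s + 1 ≤ dm x r s := by
  classical
  intro r s hir hrm hxis hszi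
  have hsb : s ≤ z i := le_of_lt hszi
  have hx_split := dm_split x r s (z i) hsb
  have hz_split := dm_split z r s (z i) hsb
  set Ax := (Finset.univ.filter fun k : Fin n => k ≤ r ∧ s < x k ∧ x k ≤ z i) with hAx
  set Bz := (Finset.univ.filter fun k : Fin n => k ≤ r ∧ s < z k ∧ z k ≤ z i) with hBz
  have hiAx : i ∉ Ax := by
    rw [hAx, mem_filter]
    rintro ⟨-, -, h2, -⟩
    exact absurd hxis (not_le.mpr h2)
  have hsub : insert i Ax ⊆ Bz := by
    intro k hk
    rcases Finset.mem_insert.mp hk with rfl | hk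
    · rw [hBz, mem_filter]
      exact ⟨mem_univ _, hir, hszi, le_refl _⟩
    · rw [hAx, mem_filter] at hk
      obtain ⟨-, hk1, hk2, hk3⟩ := hk
      have hki : k < i := by
        rcases lt_trichotomy k i with h | h | h
        · exact h
        · exact absurd (h ▸ hk2) (not_lt.mpr hxis)
        · exact absurd ⟨lt_of_le_of_lt hxis hk2, hk3⟩ (hmin k h (lt_of_le_of_lt hk1 hrm))
      rw [hBz, mem_filter]
      have := hagree k hki
      exact ⟨mem_univ _, hk1, this ▸ hk2, this ▸ hk3⟩
  have hcard : Ax.card + 1 ≤ Bz.card := by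
    have h1 : (insert i Ax).card = Ax.card + 1 := Finset.card_insert_of_notMem hiAx
    have h2 := Finset.card_le_card hsub
    omega
  have hd := hdom r (z i)
  omega


section Main
variable {x z : Perm (Fin n)}

/-- forward single step -/
lemma step_le (u v : Perm (Fin n))
    (hstep : ∃ t : Perm (Fin n), t.IsSwap ∧ v = t * u ∧ permLength u < permLength v) :
    ∀ i j : Fin n, dm v i j ≤ dm u i j := by
  classical
  obtain ⟨t, ⟨a, b, hab, rfl⟩, rfl, hlen⟩ := hstep
  rw [permLength_eq_invNum, permLength_eq_invNum] at hlen
  -- reduce to the case a < b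
  have main : ∀ a b : Fin n, a < b → invNum u < invNum (Equiv.swap a b * u) →
      ∀ i j : Fin n, dm (Equiv.swap a b * u) i j ≤ dm u i j := by
    clear hab hlen a b
    intro a b hab hlen i j
    have hmul : Equiv.swap a b * u = u * Equiv.swap (u⁻¹ a) (u⁻¹ b) := swap_mul_eq u a b
    set p := u⁻¹ a with hp
    set q := u⁻¹ b with hq
    have hup : u p = a := u.apply_symm_apply a
    have huq : u q = b := u.apply_symm_apply b
    have hpq_ne : p ≠ q := fun h => (ne_of_lt hab) (by rw [← hup, ← huq, h])
    rcases lt_or_gt_of_ne hpq_ne with hpq | hqp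
    · rw [hmul]
      exact dm_mul_swap_le hpq u (by rw [hup, huq]; exact hab) i j
    · exfalso
      set y := u * Equiv.swap p q with hy
      have hyq : y q = a := by rw [hy, Equiv.Perm.mul_apply, Equiv.swap_apply_right, hup]
      have hyp : y p = b := by rw [hy, Equiv.Perm.mul_apply, Equiv.swap_apply_left, huq]
      have hwin := invNum_lt hqp y (by rw [hyq, hyp]; exact hab)
      have hyy : y * Equiv.swap q p = u := by
        rw [hy, Equiv.swap_comm q p, mul_assoc, Equiv.swap_mul_self, mul_one]
      rw [hyy] at hwin
      rw [hmul] at hlen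
      omega
  rcases lt_or_gt_of_ne hab with h | h
  · exact main a b h hlen
  · rw [Equiv.swap_comm a b] at hlen ⊢
    exact main b a h hlen

lemma bruhat_of_dom (z : Perm (Fin n)) :
    ∀ (N : ℕ) (x : Perm (Fin n)), (∀ r s, dm z r s ≤ dm x r s) →
      (∑ c : Fin n × Fin n, (dm x c.1 c.2 - dm z c.1 c.2)) ≤ N → BruhatLE x z := by
  classical
  intro N
  induction N with
  | zero =>
    intro x hdom hsum
    by_cases hxz : x = z
    · exact Or.inl hxz
    · exfalso
      have hzero : ∀ r s : Fin n, dm x r s = dm z r s := by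
        intro r s
        have h1 := hdom r s
        have h2 : dm x r s - dm z r s = 0 := by
          have := Finset.sum_eq_zero_iff.mp (Nat.le_zero.mp hsum) (r, s) (Finset.mem_univ _)
          exact this
        omega
      have hdom' : ∀ r s, dm x r s ≤ dm z r s := fun r s => (hzero r s).le
      have hne : ∃ k : Fin n, x k ≠ z k := by
        by_contra hcon
        push_neg at hcon
        exact hxz (Equiv.ext hcon)
      set Dset := (Finset.univ.filter fun k : Fin n => x k ≠ z k) with hD
      have hDne : Dset.Nonempty := by
        obtain ⟨k, hk⟩ := hne
        exact ⟨k, by rw [hD, Finset.mem_filter]; exact ⟨Finset.mem_univ _, hk⟩⟩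
      set i := Dset.min' hDne with hi
      have hine : x i ≠ z i := by
        have hmem : i ∈ Dset := Dset.min'_mem hDne
        rw [hD, Finset.mem_filter] at hmem
        exact hmem.2
      have hagree : ∀ k, k < i → x k = z k := by
        intro k hk
        by_contra hc
        have : i ≤ k := Dset.min'_le k (by rw [hD, Finset.mem_filter]; exact ⟨Finset.mem_univ _, hc⟩)
        exact absurd hk (not_lt.mpr this)
      have h1 := first_diff x z hdom i hagree hine
      have h2 := first_diff z x hdom' i (fun k hk => (hagree k hk).symm) (Ne.symm hine)
      exact absurd h1 (asymm h2)
  | succ N ih =>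
    intro x hdom hsum
    by_cases hxz : x = z
    · exact Or.inl hxz
    · have hne : ∃ k : Fin n, x k ≠ z k := by
        by_contra hcon
        push_neg at hcon
        exact hxz (Equiv.ext hcon)
      set Dset := (Finset.univ.filter fun k : Fin n => x k ≠ z k) with hD
      have hDne : Dset.Nonempty := by
        obtain ⟨k, hk⟩ := hne
        exact ⟨k, by rw [hD, Finset.mem_filter]; exact ⟨Finset.mem_univ _, hk⟩⟩
      set i := Dset.min' hDne with hi
      have hine : x i ≠ z i := by
        have hmem : i ∈ Dset := Dset.min'_mem hDne
        rw [hD, Finset.mem_filter] at hmem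
        exact hmem.2
      have hagree : ∀ k, k < i → x k = z k := by
        intro k hk
        by_contra hc
        have : i ≤ k := Dset.min'_le k (by rw [hD, Finset.mem_filter]; exact ⟨Finset.mem_univ _, hc⟩)
        exact absurd hk (not_lt.mpr this)
      have hab : x i < z i := first_diff x z hdom i hagree hine
      -- the smallest position past i whose value lies in (x i, z i]
      set Mset := (Finset.univ.filter fun k : Fin n => i < k ∧ x i < x k ∧ x k ≤ z i) with hM
      have hMne : Mset.Nonempty := by
        refine ⟨x⁻¹ (z i), ?_⟩
        rw [hM, Finset.mem_filter]
        have hxinv : x (x⁻¹ (z i)) = z i := x.apply_symm_apply _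
        have hgt : i < x⁻¹ (z i) := by
          rcases lt_trichotomy (x⁻¹ (z i)) i with h | h | h
          · exfalso
            have := hagree _ h
            rw [hxinv] at this
            have : x⁻¹ (z i) = i := z.injective this.symm
            exact absurd h (by rw [this]; exact lt_irrefl i)
          · exfalso
            apply hine
            conv_lhs => rw [← h]
            rw [hxinv]
          · exact h
        exact ⟨Finset.mem_univ _, hgt, by rw [hxinv]; exact hab, by rw [hxinv]⟩
      set m := Mset.min' hMne with hm
      have hmmem : m ∈ Mset := Mset.min'_mem hMne
      rw [hM, Finset.mem_filter] at hmmem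
      obtain ⟨-, him, hxm, hxmb⟩ := hmmem
      have hmin : ∀ k, i < k → k < m → ¬(x i < x k ∧ x k ≤ z i) := by
        intro k h1 h2 hc
        have : m ≤ k := Mset.min'_le k
          (by rw [hM, Finset.mem_filter]; exact ⟨Finset.mem_univ _, h1, hc.1, hc.2⟩)
        exact absurd h2 (not_lt.mpr this)
      set y := x * Equiv.swap i m with hy
      -- the Bruhat step
      have hstep : ∃ t : Perm (Fin n), t.IsSwap ∧ y = t * x ∧ permLength x < permLength y := by
        refine ⟨Equiv.swap (x i) (x m), ⟨x i, x m, ne_of_lt hxm, rfl⟩, ?_, ?_⟩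
        · rw [swap_mul_eq, show x⁻¹ (x i) = i from x.symm_apply_apply i, show x⁻¹ (x m) = m from x.symm_apply_apply m, hy]
        · rw [permLength_eq_invNum, permLength_eq_invNum, hy]
          exact invNum_lt him x hxm
      have hdom_y : ∀ r s, dm z r s ≤ dm y r s := by
        intro r s
        obtain ⟨hrect, hout⟩ := dm_mul_swap him x hxm r s
        by_cases h : i ≤ r ∧ r < m ∧ x i ≤ s ∧ s < x m
        · have hstrict := strict_step x z hdom i m him hagree hab hmin r s
            h.1 h.2.1 h.2.2.1 (lt_of_lt_of_le h.2.2.2 hxmb)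
          have := hrect h
          rw [hy]
          omega
        · rw [hy, hout h]
          exact hdom r s
      have hsum_y : (∑ c : Fin n × Fin n, (dm y c.1 c.2 - dm z c.1 c.2)) ≤ N := by
        have hlt : (∑ c : Fin n × Fin n, (dm y c.1 c.2 - dm z c.1 c.2))
            < (∑ c : Fin n × Fin n, (dm x c.1 c.2 - dm z c.1 c.2)) := by
          apply Finset.sum_lt_sum
          · intro c _
            have := dm_mul_swap_le him x hxm c.1 c.2
            rw [← hy] at this
            exact Nat.sub_le_sub_right this _
          · refine ⟨(i, x i), Finset.mem_univ _, ?_⟩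
            obtain ⟨hrect, -⟩ := dm_mul_swap him x hxm i (x i)
            have h1 := hrect ⟨le_refl i, him, le_refl (x i), hxm⟩
            have h2 := hdom_y i (x i)
            show dm y i (x i) - dm z i (x i) < dm x i (x i) - dm z i (x i)
            rw [hy]
            rw [hy] at h2
            omega
        omega
      have hrec := ih y hdom_y hsum_y
      rcases hrec with heq | hlt
      · rw [heq] at hstep
        exact Or.inr (Relation.TransGen.single hstep)
      · exact Or.inr (Relation.TransGen.head hstep hlt)

end Main


end Stmt2Aux

/-- `x ≤ z` in Bruhat order iff for every `i`, `j`, the number of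
positions `k ≤ i` with `x(k) ≤ j` is at least the corresponding number for `z`. -/
theorem stmt2 (n : ℕ) (x z : Perm (Fin n)) :
    BruhatLE x z ↔
      ∀ i j : Fin n,
        (Finset.univ.filter fun k : Fin n => k ≤ i ∧ z k ≤ j).card ≤
        (Finset.univ.filter fun k : Fin n => k ≤ i ∧ x k ≤ j).card := by
  constructor
  · intro h
    rcases h with rfl | hlt
    · intro i j; exact le_refl _
    · have : ∀ i j : Fin n, Stmt2Aux.dm z i j ≤ Stmt2Aux.dm x i j := by
        induction hlt with
        | single h => exact Stmt2Aux.step_le _ _ h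
        | tail _ hstep ih =>
          intro i j
          exact (Stmt2Aux.step_le _ _ hstep i j).trans (ih i j)
      exact this
  · intro h
    exact Stmt2Aux.bruhat_of_dom z
      (∑ c : Fin n × Fin n, (Stmt2Aux.dm x c.1 c.2 - Stmt2Aux.dm z c.1 c.2)) x
      (fun r s => h r s) (le_refl _)
end

section
/- Let α, β, γ be partitions with γ ⊆ β such that β∖γ is a rook strip (i.e., both a horizontal and a vertical strip). For LR-fillings X, Z of shape β∖γ and content α, Z ≤_box X if and only if Z ≤_dom X. -/
open Equiv

namespace Stmt6W

def ind (w : ℕ → ℕ) (u t : ℕ) : ℕ := if 1 ≤ w t ∧ w t ≤ u then 1 else 0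
def cnt (w : ℕ → ℕ) (u m : ℕ) : ℕ := ∑ t ∈ Finset.range m, ind w u t
def indE (w : ℕ → ℕ) (v t : ℕ) : ℕ := if w t = v then 1 else 0
def Ncnt (w : ℕ → ℕ) (v m : ℕ) : ℕ := ∑ t ∈ Finset.range m, indE w v t
def Lat (w : ℕ → ℕ) : Prop := ∀ v m, 2 ≤ v → Ncnt w v m ≤ Ncnt w (v-1) m
def swapW (w : ℕ → ℕ) (i j : ℕ) : ℕ → ℕ := fun t => w (Equiv.swap i j t)

lemma ind_mono (w : ℕ → ℕ) (t : ℕ) {u u' : ℕ} (h : u ≤ u') : ind w u t ≤ ind w u' t := by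
  unfold ind; split
  · rename_i h'; rw [if_pos ⟨h'.1, h'.2.trans h⟩]
  · exact Nat.zero_le _

lemma cnt_mono_u (w : ℕ → ℕ) (m : ℕ) {u u' : ℕ} (h : u ≤ u') : cnt w u m ≤ cnt w u' m :=
  Finset.sum_le_sum fun t _ => ind_mono w t h

lemma cnt_mono_m (w : ℕ → ℕ) (u : ℕ) {m m' : ℕ} (h : m ≤ m') : cnt w u m ≤ cnt w u m' :=
  Finset.sum_le_sum_of_subset (Finset.range_subset_range.2 h)

lemma Ncnt_mono_m (w : ℕ → ℕ) (v : ℕ) {m m' : ℕ} (h : m ≤ m') : Ncnt w v m ≤ Ncnt w v m' :=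
  Finset.sum_le_sum_of_subset (Finset.range_subset_range.2 h)

lemma cnt_succ (w : ℕ → ℕ) (u m : ℕ) : cnt w u (m+1) = cnt w u m + ind w u m :=
  Finset.sum_range_succ _ _

lemma Ncnt_succ (w : ℕ → ℕ) (v m : ℕ) : Ncnt w v (m+1) = Ncnt w v m + indE w v m :=
  Finset.sum_range_succ _ _

lemma cnt_split (w : ℕ → ℕ) (u : ℕ) {k m : ℕ} (h : k ≤ m) :
    cnt w u m = cnt w u k + ∑ t ∈ Finset.Ico k m, ind w u t := by
  rw [cnt, cnt, Finset.range_eq_Ico, Finset.range_eq_Ico]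
  exact (Finset.sum_Ico_consecutive (ind w u) (Nat.zero_le k) h).symm

lemma Ncnt_split (w : ℕ → ℕ) (v : ℕ) {k m : ℕ} (h : k ≤ m) :
    Ncnt w v m = Ncnt w v k + ∑ t ∈ Finset.Ico k m, indE w v t := by
  rw [Ncnt, Ncnt, Finset.range_eq_Ico, Finset.range_eq_Ico]
  exact (Finset.sum_Ico_consecutive (indE w v) (Nat.zero_le k) h).symm

lemma cnt_congr {w w' : ℕ → ℕ} (u m : ℕ) (h : ∀ t, t < m → w t = w' t) :
    cnt w u m = cnt w' u m :=
  Finset.sum_congr rfl fun t ht => by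
    unfold ind; rw [h t (Finset.mem_range.1 ht)]

lemma Ncnt_congr {w w' : ℕ → ℕ} (v m : ℕ) (h : ∀ t, t < m → w t = w' t) :
    Ncnt w v m = Ncnt w' v m :=
  Finset.sum_congr rfl fun t ht => by
    unfold indE; rw [h t (Finset.mem_range.1 ht)]

lemma ind_level_split (w : ℕ → ℕ) (t : ℕ) {u u' : ℕ} (h : u ≤ u') :
    ind w u' t = ind w u t + (if u + 1 ≤ w t ∧ w t ≤ u' then 1 else 0) := by
  unfold ind
  rcases Nat.lt_or_ge (w t) 1 with h0 | h1
  · rw [if_neg (by omega), if_neg (by omega), if_neg (by omega)]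
  rcases le_or_gt (w t) u with hu | hu
  · rw [if_pos ⟨h1, hu.trans h⟩, if_pos ⟨h1, hu⟩, if_neg (by omega)]
  rcases le_or_gt (w t) u' with hu' | hu'
  · rw [if_pos ⟨h1, hu'⟩, if_neg (by omega), if_pos (by omega)]
  · rw [if_neg (by omega), if_neg (by omega), if_neg (by omega)]

lemma ind_eq_ind_add_indE (w : ℕ → ℕ) (t : ℕ) {v : ℕ} (h : 1 ≤ v) :
    ind w v t = ind w (v-1) t + indE w v t := by
  unfold ind indE
  rcases Nat.lt_or_ge (w t) 1 with h0 | h1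
  · rw [if_neg (by omega), if_neg (by omega), if_neg (by omega)]
  rcases eq_or_ne (w t) v with he | hne
  · rw [if_pos ⟨h1, he.le⟩, if_neg (by omega), if_pos he]
  rcases le_or_gt (w t) v with hu | hu
  · rw [if_pos ⟨h1, hu⟩, if_pos ⟨h1, by omega⟩, if_neg hne]
  · rw [if_neg (by omega), if_neg (by omega), if_neg hne]

lemma cnt_level_split (w : ℕ → ℕ) (m : ℕ) {v : ℕ} (h : 1 ≤ v) :
    cnt w v m = cnt w (v-1) m + Ncnt w v m := by
  rw [cnt, cnt, Ncnt, ← Finset.sum_add_distrib]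
  exact Finset.sum_congr rfl fun t _ => ind_eq_ind_add_indE w t h

lemma swapW_left (w : ℕ → ℕ) (i j : ℕ) : swapW w i j i = w j := by
  simp [swapW]

lemma swapW_right (w : ℕ → ℕ) (i j : ℕ) : swapW w i j j = w i := by
  simp [swapW]

lemma swapW_other (w : ℕ → ℕ) {i j t : ℕ} (h1 : t ≠ i) (h2 : t ≠ j) : swapW w i j t = w t := by
  simp [swapW, Equiv.swap_apply_of_ne_of_ne h1 h2]

lemma swapW_invol (w : ℕ → ℕ) (i j : ℕ) : swapW (swapW w i j) i j = w := by
  funext t; simp [swapW]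

lemma cnt_swap_out_lo {w : ℕ → ℕ} {i j m : ℕ} (h : m ≤ i) (hij : i < j) (u : ℕ) :
    cnt (swapW w i j) u m = cnt w u m :=
  cnt_congr u m fun t ht => swapW_other w (by omega) (by omega)

lemma Ncnt_swap_out_lo {w : ℕ → ℕ} {i j m : ℕ} (h : m ≤ i) (hij : i < j) (v : ℕ) :
    Ncnt (swapW w i j) v m = Ncnt w v m :=
  Ncnt_congr v m fun t ht => swapW_other w (by omega) (by omega)

lemma sum_swap_inv {f : ℕ → ℕ} {i j m : ℕ} (hi : i < m) (hj : j < m) :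
    ∑ t ∈ Finset.range m, f (Equiv.swap i j t) = ∑ t ∈ Finset.range m, f t := by
  apply Finset.sum_equiv (Equiv.swap i j)
  · intro t
    simp only [Finset.mem_range]
    rcases eq_or_ne t i with rfl | h1
    · rw [Equiv.swap_apply_left]; omega
    rcases eq_or_ne t j with rfl | h2
    · rw [Equiv.swap_apply_right]; omega
    · rw [Equiv.swap_apply_of_ne_of_ne h1 h2]
  · intro t _; rfl

lemma cnt_swap_out_hi {w : ℕ → ℕ} {i j m : ℕ} (hi : i < m) (hj : j < m) (u : ℕ) :
    cnt (swapW w i j) u m = cnt w u m := by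
  unfold cnt ind swapW
  exact sum_swap_inv (f := fun t => if 1 ≤ w t ∧ w t ≤ u then 1 else 0) hi hj

lemma Ncnt_swap_out_hi {w : ℕ → ℕ} {i j m : ℕ} (hi : i < m) (hj : j < m) (v : ℕ) :
    Ncnt (swapW w i j) v m = Ncnt w v m := by
  unfold Ncnt indE swapW
  exact sum_swap_inv (f := fun t => if w t = v then 1 else 0) hi hj

lemma cnt_swap_mid {w : ℕ → ℕ} {i j m : ℕ} (hij : i < j) (him : i < m) (hmj : m ≤ j) (u : ℕ) :
    cnt (swapW w i j) u m + ind w u i = cnt w u m + ind w u j := by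
  have hmem : i ∈ Finset.range m := Finset.mem_range.2 him
  have e1 : cnt (swapW w i j) u m = ind (swapW w i j) u i + ∑ t ∈ (Finset.range m).erase i, ind (swapW w i j) u t := (Finset.add_sum_erase _ _ hmem).symm
  have e2 : cnt w u m = ind w u i + ∑ t ∈ (Finset.range m).erase i, ind w u t := (Finset.add_sum_erase _ _ hmem).symm
  have e3 : ∑ t ∈ (Finset.range m).erase i, ind (swapW w i j) u t = ∑ t ∈ (Finset.range m).erase i, ind w u t := by
    apply Finset.sum_congr rfl
    intro t ht
    have h1 := Finset.ne_of_mem_erase ht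
    have h2 : t < m := Finset.mem_range.1 (Finset.mem_of_mem_erase ht)
    unfold ind
    rw [swapW_other w h1 (by omega)]
  have e4 : ind (swapW w i j) u i = ind w u j := by unfold ind; rw [swapW_left]
  omega

lemma Ncnt_swap_mid {w : ℕ → ℕ} {i j m : ℕ} (hij : i < j) (him : i < m) (hmj : m ≤ j) (v : ℕ) :
    Ncnt (swapW w i j) v m + indE w v i = Ncnt w v m + indE w v j := by
  have hmem : i ∈ Finset.range m := Finset.mem_range.2 him
  have e1 : Ncnt (swapW w i j) v m = indE (swapW w i j) v i + ∑ t ∈ (Finset.range m).erase i, indE (swapW w i j) v t := (Finset.add_sum_erase _ _ hmem).symm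
  have e2 : Ncnt w v m = indE w v i + ∑ t ∈ (Finset.range m).erase i, indE w v t := (Finset.add_sum_erase _ _ hmem).symm
  have e3 : ∑ t ∈ (Finset.range m).erase i, indE (swapW w i j) v t = ∑ t ∈ (Finset.range m).erase i, indE w v t := by
    apply Finset.sum_congr rfl
    intro t ht
    have h1 := Finset.ne_of_mem_erase ht
    have h2 : t < m := Finset.mem_range.1 (Finset.mem_of_mem_erase ht)
    unfold indE
    rw [swapW_other w h1 (by omega)]
  have e4 : indE (swapW w i j) v i = indE w v j := by unfold indE; rw [swapW_left]
  omega

structure Inv (B : Finset ℕ) (M : ℕ) (x w : ℕ → ℕ) : Prop where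
  supp : ∀ i, 1 ≤ w i ↔ i ∈ B
  bdd : ∀ i, w i ≤ M
  lat : Lat w
  cont : ∀ v, 1 ≤ v → Ncnt w v M = Ncnt x v M

def UpStep (z z' : ℕ → ℕ) : Prop :=
  ∃ i j, i < j ∧ 1 ≤ z j ∧ z j < z i ∧ z' = swapW z i j

def meas (M : ℕ) (x z : ℕ → ℕ) : ℕ :=
  ∑ u ∈ Finset.range (M+1), ∑ m ∈ Finset.range (M+1), (cnt x u m - cnt z u m)

lemma cnt_zero (w : ℕ → ℕ) (m : ℕ) : cnt w 0 m = 0 := by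
  unfold cnt
  apply Finset.sum_eq_zero
  intro t _
  unfold ind
  rw [if_neg (by omega)]

lemma cnt_tot_eq {B : Finset ℕ} {M : ℕ} {x z : ℕ → ℕ}
    (hz : Inv B M x z) : ∀ u, cnt z u M = cnt x u M := by
  intro u
  induction u with
  | zero => rw [cnt_zero, cnt_zero]
  | succ u ih =>
      have h1 : cnt z (u+1) M = cnt z u M + Ncnt z (u+1) M := by
        have := cnt_level_split z M (v := u+1) (by omega); simpa using this
      have h2 : cnt x (u+1) M = cnt x u M + Ncnt x (u+1) M := by
        have := cnt_level_split x M (v := u+1) (by omega); simpa using this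
      rw [h1, h2, ih, hz.cont (u+1) (by omega)]

theorem word_step (B : Finset ℕ) (M : ℕ) (hBM : ∀ i ∈ B, i < M) (x z : ℕ → ℕ)
    (hlatx : Lat x) (hz : Inv B M x z) (hsuppx : ∀ i, 1 ≤ x i ↔ i ∈ B)
    (hdom : ∀ u m, cnt z u m ≤ cnt x u m) (hne : z ≠ x) :
    ∃ z', Inv B M x z' ∧ (∀ u m, cnt z' u m ≤ cnt x u m) ∧ UpStep z z' ∧
      meas M x z' < meas M x z := by
  classical
  -- first difference k
  have hex : ∃ t, z t ≠ x t := Function.ne_iff.1 hne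
  obtain ⟨k, hk, hklt⟩ : ∃ k, z k ≠ x k ∧ ∀ t, t < k → z t = x t :=
    ⟨Nat.find hex, Nat.find_spec hex, fun t ht => not_not.1 (Nat.find_min hex ht)⟩
  have hcntk : ∀ u m, m ≤ k → cnt z u m = cnt x u m := by
    intro u m hm
    exact cnt_congr u m (fun t ht => hklt t (by omega))
  have hNk : ∀ v m, m ≤ k → Ncnt z v m = Ncnt x v m := by
    intro v m hm
    exact Ncnt_congr v m (fun t ht => hklt t (by omega))
  have hindk : ∀ u, ind z u k ≤ ind x u k := by
    intro u
    have h1 := hdom u (k+1)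
    rw [cnt_succ, cnt_succ, hcntk u k le_rfl] at h1
    omega
  have hkB : k ∈ B := by
    by_contra hkb
    have h1 : ¬ 1 ≤ z k := fun h => hkb ((hz.supp k).1 h)
    have h2 : ¬ 1 ≤ x k := fun h => hkb ((hsuppx k).1 h)
    exact hk (by omega)
  have hc1 : 1 ≤ z k := (hz.supp k).2 hkB
  have ha1 : 1 ≤ x k := (hsuppx k).2 hkB
  have hac : x k < z k := by
    have h1 := hindk (z k)
    unfold ind at h1
    rw [if_pos ⟨hc1, le_rfl⟩] at h1
    rcases Nat.lt_or_ge (x k) (z k) with h | h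
    · exact h
    · exfalso
      rcases Nat.lt_or_ge (z k) (x k) with h' | h'
      · split_ifs at h1 with h2 <;> omega
      · exact hk (by omega)
  have hkM : k < M := hBM k hkB
  -- existence of a position j > k with x k ≤ z j < z k
  have hJex : ∃ t, k < t ∧ x k ≤ z t ∧ z t ≤ z k - 1 := by
    set J : (ℕ → ℕ) → ℕ → ℕ := fun w t => if x k ≤ w t ∧ w t ≤ z k - 1 then 1 else 0 with hJdef
    have hsplit : ∀ w : ℕ → ℕ, ∀ t, ind w (z k - 1) t = ind w (x k - 1) t + J w t := by
      intro w t
      unfold ind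
      simp only [hJdef]
      split_ifs <;> omega
    have hsum : ∀ w : ℕ → ℕ,
        cnt w (z k - 1) M = cnt w (x k - 1) M + ∑ t ∈ Finset.range M, J w t := by
      intro w
      unfold cnt
      rw [← Finset.sum_add_distrib]
      exact Finset.sum_congr rfl fun t _ => hsplit w t
    have hsplitM : ∀ w : ℕ → ℕ, ∑ t ∈ Finset.range M, J w t
        = ∑ t ∈ Finset.range k, J w t + ∑ t ∈ Finset.Ico k M, J w t := by
      intro w
      rw [Finset.range_eq_Ico, Finset.range_eq_Ico]
      exact (Finset.sum_Ico_consecutive (J w) (Nat.zero_le k) hkM.le).symm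
    have hprefJ : ∑ t ∈ Finset.range k, J z t = ∑ t ∈ Finset.range k, J x t := by
      apply Finset.sum_congr rfl
      intro t ht
      simp only [hJdef]
      rw [hklt t (Finset.mem_range.1 ht)]
    have h1 : ∑ t ∈ Finset.Ico k M, J z t = ∑ t ∈ Finset.Ico k M, J x t := by
      have e1 := hsum z; have e2 := hsum x
      have e3 := cnt_tot_eq hz (z k - 1)
      have e4 := cnt_tot_eq hz (x k - 1)
      have e5 := hsplitM z; have e6 := hsplitM x
      omega
    have h2 : 1 ≤ ∑ t ∈ Finset.Ico k M, J x t := by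
      have hJk : J x k = 1 := by
        simp only [hJdef]
        rw [if_pos ⟨le_rfl, by omega⟩]
      calc 1 = J x k := hJk.symm
        _ ≤ _ := Finset.single_le_sum (f := J x) (fun t _ => Nat.zero_le _)
            (Finset.mem_Ico.2 ⟨le_rfl, hkM⟩)
    have h3 : ∃ t ∈ Finset.Ico k M, J z t ≠ 0 := by
      by_contra hcon
      push_neg at hcon
      rw [Finset.sum_eq_zero hcon] at h1
      omega
    obtain ⟨t, htmem, hjt⟩ := h3
    have htk : k ≤ t := (Finset.mem_Ico.1 htmem).1
    simp only [hJdef] at hjt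
    split_ifs at hjt with hcond
    · refine ⟨t, ?_, hcond.1, hcond.2⟩
      rcases Nat.eq_or_lt_of_le htk with rfl | h
      · omega
      · exact h
    · omega
  -- j := least such position
  obtain ⟨j, ⟨hkj, hadj, hdc'⟩, hjmin⟩ :
      ∃ j, (k < j ∧ x k ≤ z j ∧ z j ≤ z k - 1) ∧
        ∀ t, t < j → ¬ (k < t ∧ x k ≤ z t ∧ z t ≤ z k - 1) :=
    ⟨Nat.find hJex, Nat.find_spec hJex, fun t ht => Nat.find_min hJex ht⟩
  set d := z j with hddef
  have hbet : ∀ t, k ≤ t → t < j → z t < x k ∨ z k ≤ z t := by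
    intro t h1 h2
    rcases Nat.eq_or_lt_of_le h1 with rfl | h1'
    · right; exact le_rfl
    · have h3 := hjmin t h2
      simp only [not_and, not_le] at h3
      have := h3 h1'
      omega
  have hjB : j ∈ B := (hz.supp j).1 (by omega)
  have hjM : j < M := hBM j hjB
  have had : x k ≤ d := hadj
  have hd1 : 1 ≤ d := by omega
  have hdc : d < z k := by omega
  -- the "good" predicate and greatest good index i
  set P : ℕ → Prop := fun i => k ≤ i ∧ i < j ∧ z k ≤ z i ∧
      ∀ u m, d ≤ u → u < z i → i < m → m ≤ j → cnt z u m + 1 ≤ cnt x u m with hPdef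
  have hPk : P k := by
    refine ⟨le_rfl, hkj, le_rfl, ?_⟩
    intro u m hdu huC hkm hmj
    have hau : x k ≤ u := le_trans had hdu
    have e1 := cnt_split z u (le_of_lt hkm)
    have e2 := cnt_split z (x k - 1) (le_of_lt hkm)
    have e3 : ∑ t ∈ Finset.Ico k m, ind z u t = ∑ t ∈ Finset.Ico k m, ind z (x k - 1) t := by
      apply Finset.sum_congr rfl
      intro t ht
      rw [Finset.mem_Ico] at ht
      have hb := hbet t ht.1 (by omega)
      unfold ind
      split_ifs <;> omega
    have e4 := cnt_split x u (le_of_lt hkm)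
    have e5 : ∑ t ∈ Finset.Ico k m, ind x (x k - 1) t + 1 ≤ ∑ t ∈ Finset.Ico k m, ind x u t := by
      rw [Finset.sum_eq_sum_Ico_succ_bot hkm (f := fun t => ind x (x k - 1) t),
          Finset.sum_eq_sum_Ico_succ_bot hkm (f := fun t => ind x u t)]
      have i1 : ind x (x k - 1) k = 0 := by unfold ind; rw [if_neg (by omega)]
      have i2 : ind x u k = 1 := by unfold ind; rw [if_pos ⟨ha1, hau⟩]
      have i3 : ∑ t ∈ Finset.Ico (k+1) m, ind x (x k - 1) t
          ≤ ∑ t ∈ Finset.Ico (k+1) m, ind x u t :=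
        Finset.sum_le_sum fun t _ => ind_mono x t (by omega)
      omega
    have e6 := hdom (x k - 1) m
    have e7 := cnt_split x (x k - 1) (le_of_lt hkm)
    have e8 := hcntk u k le_rfl
    have e9 := hcntk (x k - 1) k le_rfl
    omega
  haveI hPdec : DecidablePred P := Classical.decPred P
  obtain ⟨i, hPi, hgmax⟩ : ∃ i, P i ∧ ∀ t, i < t → t ≤ j → ¬ P t :=
    ⟨Nat.findGreatest P j, Nat.findGreatest_spec (le_of_lt hkj) hPk,
      fun t h1 h2 => Nat.findGreatest_is_greatest h1 h2⟩
  obtain ⟨hki, hij, hcC, hgood⟩ := hPi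
  have hC1 : 1 ≤ z i := le_trans hc1 hcC
  have hdCi : d < z i := lt_of_lt_of_le hdc hcC
  have hiB : i ∈ B := (hz.supp i).1 hC1
  have hiM : i < M := hBM i hiB
  -- no value in [x k, z k) occurs in [k, j)
  have hnomid : ∀ t v, k ≤ t → t < j → x k ≤ v → v < z k → z t ≠ v := by
    intro t v h1 h2 h3 h4
    have := hbet t h1 h2
    omega
  have hNconst : ∀ v m m', x k ≤ v → v < z k → k ≤ m → m ≤ m' → m' ≤ j →
      Ncnt z v m' = Ncnt z v m := by
    intro v m m' h1 h2 h3 h4 h5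
    rw [Ncnt_split z v h4]
    have : ∑ t ∈ Finset.Ico m m', indE z v t = 0 := by
      apply Finset.sum_eq_zero
      intro t ht
      rw [Finset.mem_Ico] at ht
      unfold indE
      rw [if_neg (hnomid t v (by omega) (by omega) h1 h2)]
    omega
  -- (L1): for m ∈ (i, j], Ncnt z d m + 1 ≤ Ncnt z (d-1) m, when 2 ≤ d
  have hL1 : ∀ m, 2 ≤ d → i < m → m ≤ j → Ncnt z d m + 1 ≤ Ncnt z (d-1) m := by
    intro m hd2 him hmj
    rcases Nat.eq_or_lt_of_le had with heq | hlt
    · -- d = x k : use lattice of x at k+1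
      have hlx := hlatx (x k) (k+1) (by omega)
      have e1 : Ncnt x (x k) (k+1) = Ncnt x (x k) k + 1 := by
        rw [Ncnt_succ]; unfold indE; rw [if_pos rfl]
      have e2 : Ncnt x (x k - 1) (k+1) = Ncnt x (x k - 1) k := by
        rw [Ncnt_succ]; unfold indE; rw [if_neg (by omega)]; omega
      have e3 : Ncnt z d m = Ncnt z d k := hNconst d k m had hdc le_rfl (by omega) hmj
      have e4 := hNk (x k) k le_rfl
      have e5 := hNk (x k - 1) k le_rfl
      have e6 : Ncnt z (x k - 1) k ≤ Ncnt z (x k - 1) m := Ncnt_mono_m z _ (by omega)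
      rw [heq] at hlx e1 e2 e4 e5 e6
      omega
    · -- x k < d : use lattice of z at j+1
      have hlz := hz.lat d (j+1) hd2
      have e1 : Ncnt z d (j+1) = Ncnt z d j + 1 := by
        rw [Ncnt_succ]; unfold indE; rw [if_pos rfl]
      have e2 : Ncnt z d j = Ncnt z d k := hNconst d k j had hdc le_rfl (by omega) le_rfl
      have e3 : Ncnt z d m = Ncnt z d k := hNconst d k m had hdc le_rfl (by omega) hmj
      have e4 : Ncnt z (d-1) (j+1) = Ncnt z (d-1) j := by
        rw [Ncnt_succ]; unfold indE; rw [if_neg (by omega)]; omega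
      have e5 : Ncnt z (d-1) j = Ncnt z (d-1) m :=
        hNconst (d-1) m j (by omega) (by omega) (by omega) hmj le_rfl
      omega
  -- (L4): for m ∈ (i, j], Ncnt z (z i + 1) m + 1 ≤ Ncnt z (z i) m
  have hL4 : ∀ m, i < m → m ≤ j → Ncnt z (z i + 1) m + 1 ≤ Ncnt z (z i) m := by
    by_contra hcon
    push_neg at hcon
    obtain ⟨m0, him0, hm0j, hfail⟩ := hcon
    have hQex : ∃ m, (i < m ∧ m ≤ j) ∧ Ncnt z (z i) m ≤ Ncnt z (z i + 1) m :=
      ⟨m0, ⟨him0, hm0j⟩, by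
        have := hz.lat (z i + 1) m0 (by omega)
        simp only [Nat.add_sub_cancel] at this
        omega⟩
    -- least failure
    have hQex' : ∃ m, i < m ∧ m ≤ j ∧ Ncnt z (z i) m ≤ Ncnt z (z i + 1) m := by
      obtain ⟨m, ⟨h1, h2⟩, h3⟩ := hQex; exact ⟨m, h1, h2, h3⟩
    obtain ⟨ms, ⟨hims, hmsj, hmseq⟩, hmsmin⟩ :
        ∃ ms, (i < ms ∧ ms ≤ j ∧ Ncnt z (z i) ms ≤ Ncnt z (z i + 1) ms) ∧
          ∀ m', m' < ms → ¬ (i < m' ∧ m' ≤ j ∧ Ncnt z (z i) m' ≤ Ncnt z (z i + 1) m') :=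
      ⟨Nat.find hQex', Nat.find_spec hQex', fun m' hm' => Nat.find_min hQex' hm'⟩
    have hmin : ∀ m', i < m' → m' ≤ j → m' < ms → Ncnt z (z i + 1) m' + 1 ≤ Ncnt z (z i) m' := by
      intro m' h1 h2 h3
      have h4 := hmsmin m' h3
      push_neg at h4
      have := h4 h1 h2
      omega
    -- equality at ms by lattice
    have hlatzi := hz.lat (z i + 1) ms (by omega)
    simp only [Nat.add_sub_cancel] at hlatzi
    have hEms : Ncnt z (z i + 1) ms = Ncnt z (z i) ms := le_antisymm hlatzi hmseq
    -- strictness at i+1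
    have hstrict1 : Ncnt z (z i + 1) (i+1) + 1 ≤ Ncnt z (z i) (i+1) := by
      have e1 : Ncnt z (z i) (i+1) = Ncnt z (z i) i + 1 := by
        rw [Ncnt_succ]; unfold indE; rw [if_pos rfl]
      have e2 : Ncnt z (z i + 1) (i+1) = Ncnt z (z i + 1) i := by
        rw [Ncnt_succ]; unfold indE; rw [if_neg (by omega)]; omega
      have e3 := hz.lat (z i + 1) i (by omega)
      simp only [Nat.add_sub_cancel] at e3
      omega
    have hms2 : i + 1 < ms := by
      rcases Nat.lt_or_ge (i+1) ms with h | h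
      · exact h
      · exfalso
        have hmse : ms = i + 1 := by omega
        rw [hmse] at hmseq
        omega
    obtain ⟨p, hpdef⟩ : ∃ p, p = ms - 1 := ⟨ms - 1, rfl⟩
    have hip : i < p := by omega
    have hpj : p < j := by omega
    have hstrp : Ncnt z (z i + 1) p + 1 ≤ Ncnt z (z i) p := hmin p hip (by omega) (by omega)
    have hmsp : ms = p + 1 := by omega
    have hsucc1 : Ncnt z (z i + 1) ms = Ncnt z (z i + 1) p + indE z (z i + 1) p := by
      rw [hmsp, Ncnt_succ]
    have hsucc2 : Ncnt z (z i) ms = Ncnt z (z i) p + indE z (z i) p := by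
      rw [hmsp, Ncnt_succ]
    have hindE1 : indE z (z i + 1) p ≤ 1 := by unfold indE; split_ifs <;> omega
    have hindE2 : indE z (z i) p ≤ 1 := by unfold indE; split_ifs <;> omega
    have hzp : z p = z i + 1 := by
      by_contra hcon2
      have : indE z (z i + 1) p = 0 := by unfold indE; rw [if_neg hcon2]
      omega
    -- p is not good
    have hnP : ¬ P p := hgmax p hip (by omega)
    simp only [hPdef, not_and, not_forall] at hnP
    have hcp : z k ≤ z p := by omega
    obtain ⟨u, m', hdu, huC, hpm', hm'j, hfail'⟩ := hnP (by omega) hpj hcp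
    have hEQ : cnt z u m' = cnt x u m' := by
      have := hdom u m'
      omega
    have huC' : u = z i := by
      by_contra hcon2
      have h1 : u < z i := by omega
      have := hgood u m' hdu h1 (by omega) hm'j
      omega
    subst huC'
    -- (α) Ncnt x (z i) m' + 1 ≤ Ncnt z (z i) m'
    have halpha : Ncnt x (z i) m' + 1 ≤ Ncnt z (z i) m' := by
      have e1 := cnt_level_split z m' (v := z i) (by omega)
      have e2 := cnt_level_split x m' (v := z i) (by omega)
      have e3 := hgood (z i - 1) m' (by omega) (by omega) (by omega) hm'j
      omega
    -- (β) Ncnt z (z i + 1) m' ≤ Ncnt x (z i + 1) m'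
    have hbeta : Ncnt z (z i + 1) m' ≤ Ncnt x (z i + 1) m' := by
      have e1 := cnt_level_split z m' (v := z i + 1) (by omega)
      have e2 := cnt_level_split x m' (v := z i + 1) (by omega)
      simp only [Nat.add_sub_cancel] at e1 e2
      have e3 := hdom (z i + 1) m'
      omega
    have hgamma := hlatx (z i + 1) m' (by omega)
    simp only [Nat.add_sub_cancel] at hgamma
    have hkey : Ncnt z (z i + 1) m' + 1 ≤ Ncnt z (z i) m' := by omega
    -- find p' ∈ [p+1, m') with z p' = z i
    have hpm'1 : p + 1 ≤ m' := by omega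
    have hEp1 : Ncnt z (z i + 1) (p+1) = Ncnt z (z i) (p+1) := by
      have hmsp : ms = p + 1 := by omega
      rw [← hmsp]; exact hEms
    have hpex : ∃ p' ∈ Finset.Ico (p+1) m', z p' = z i := by
      by_contra hcon2
      push_neg at hcon2
      have e1 : Ncnt z (z i) m' = Ncnt z (z i) (p+1) := by
        rw [Ncnt_split z (z i) hpm'1]
        have : ∑ t ∈ Finset.Ico (p+1) m', indE z (z i) t = 0 := by
          apply Finset.sum_eq_zero
          intro t ht
          unfold indE
          rw [if_neg (hcon2 t ht)]
        omega
      have e2 : Ncnt z (z i + 1) (p+1) ≤ Ncnt z (z i + 1) m' := Ncnt_mono_m z _ (by omega)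
      omega
    obtain ⟨p', hp'mem, hzp'⟩ := hpex
    rw [Finset.mem_Ico] at hp'mem
    have hnP' : ¬ P p' := hgmax p' (by omega) (by omega)
    simp only [hPdef, not_and, not_forall] at hnP'
    obtain ⟨u2, m2, hdu2, hu2C, hp'm2, hm2j, hfail2⟩ := hnP' (by omega) (by omega) (by omega)
    rw [hzp'] at hu2C
    have := hgood u2 m2 hdu2 hu2C (by omega) hm2j
    omega
  -- helper indE evaluations
  have iE : ∀ (v' t' : ℕ), z t' = v' → indE z v' t' = 1 := fun v' t' h => by
    unfold indE; rw [if_pos h]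
  have iNE : ∀ (v' t' : ℕ), z t' ≠ v' → indE z v' t' = 0 := fun v' t' h => by
    unfold indE; rw [if_neg h]
  -- dominance for z'
  have hdom' : ∀ u m, cnt (swapW z i j) u m ≤ cnt x u m := by
    intro u m
    rcases le_or_gt m i with hmi | him
    · rw [cnt_swap_out_lo hmi hij]; exact hdom u m
    rcases Nat.lt_or_ge j m with hjm | hmj
    · rw [cnt_swap_out_hi (by omega) hjm]; exact hdom u m
    have e := cnt_swap_mid (w := z) hij him hmj u
    rcases le_or_gt (z i) u with hCu | hCu
    · have i1 : ind z u i = 1 := by unfold ind; rw [if_pos ⟨hC1, hCu⟩]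
      have i2 : ind z u j = 1 := by unfold ind; rw [if_pos ⟨hd1, by omega⟩]
      have := hdom u m
      omega
    have i1 : ind z u i = 0 := by unfold ind; rw [if_neg (by omega)]
    rcases le_or_gt d u with hdu | hdu
    · have i2 : ind z u j = 1 := by unfold ind; rw [if_pos ⟨hd1, hdu⟩]
      have := hgood u m hdu hCu him hmj
      omega
    · have i2 : ind z u j = 0 := by unfold ind; rw [if_neg (by omega)]
      have := hdom u m
      omega
  refine ⟨swapW z i j, ?_, hdom', ⟨i, j, hij, hd1, hdCi, rfl⟩, ?_⟩
  · -- Inv for z'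
    refine ⟨?_, ?_, ?_, ?_⟩
    · intro t
      rcases eq_or_ne t i with rfl | h1
      · rw [swapW_left]
        constructor
        · intro _; exact hiB
        · intro _; omega
      rcases eq_or_ne t j with rfl | h2
      · rw [swapW_right]
        constructor
        · intro _; exact hjB
        · intro _; omega
      · rw [swapW_other z h1 h2]; exact hz.supp t
    · intro t
      rcases eq_or_ne t i with rfl | h1
      · rw [swapW_left]; exact hz.bdd j
      rcases eq_or_ne t j with rfl | h2
      · rw [swapW_right]; exact hz.bdd i
      · rw [swapW_other z h1 h2]; exact hz.bdd t
    · -- latticeness of z'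
      intro v m h2v
      rcases le_or_gt m i with hmi | him
      · rw [Ncnt_swap_out_lo hmi hij, Ncnt_swap_out_lo hmi hij]
        exact hz.lat v m h2v
      rcases Nat.lt_or_ge j m with hjm | hmj
      · rw [Ncnt_swap_out_hi (by omega) hjm, Ncnt_swap_out_hi (by omega) hjm]
        exact hz.lat v m h2v
      have Ev := Ncnt_swap_mid (w := z) hij him hmj v
      have Ev1 := Ncnt_swap_mid (w := z) hij him hmj (v-1)
      have L0 := hz.lat v m h2v
      have LC := hz.lat (z i) m (by omega)
      have hposC : Ncnt z (z i) i + 1 ≤ Ncnt z (z i) m := by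
        have e1 : Ncnt z (z i) (i+1) = Ncnt z (z i) i + 1 := by
          rw [Ncnt_succ, iE _ _ rfl]
        have e2 : Ncnt z (z i) (i+1) ≤ Ncnt z (z i) m := Ncnt_mono_m z _ (by omega)
        omega
      have hL4m := hL4 m him hmj
      rcases eq_or_ne v (z j) with hv | hv
      · subst hv
        rw [iNE _ _ (by omega), iE _ _ rfl] at Ev
        rw [iNE _ _ (by omega), iNE _ _ (by omega)] at Ev1
        have hL1' := hL1 m (by omega) him hmj
        rw [hddef] at hL1'
        omega
      rcases eq_or_ne v (z j + 1) with hv2 | hv2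
      · subst hv2
        have hv1 : z j + 1 - 1 = z j := by omega
        rw [hv1] at Ev1 L0 ⊢
        rw [iNE _ _ (by omega), iE _ _ rfl] at Ev1
        rcases eq_or_ne (z i) (z j + 1) with hCd | hCd
        · rw [iE _ _ hCd, iNE _ _ (by omega)] at Ev
          have : z i - 1 = z j := by omega
          rw [this] at LC
          rw [← hCd] at Ev ⊢
          omega
        · rw [iNE _ _ hCd, iNE _ _ (by omega)] at Ev
          omega
      rcases eq_or_ne v (z i) with hv3 | hv3
      · subst hv3
        rw [iE _ _ rfl, iNE _ _ (by omega)] at Ev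
        rw [iNE _ _ (by omega)] at Ev1
        have hge : indE z (z i - 1) j ≤ 1 := by unfold indE; split_ifs <;> omega
        omega
      rcases eq_or_ne v (z i + 1) with hv4 | hv4
      · subst hv4
        have hv1 : z i + 1 - 1 = z i := by omega
        rw [hv1] at Ev1 L0 ⊢
        rw [iNE _ _ (by omega), iNE _ _ (by omega)] at Ev
        rw [iE _ _ rfl, iNE _ _ (by omega)] at Ev1
        omega
      · rw [iNE _ _ (by omega), iNE _ _ (by omega)] at Ev
        rw [iNE _ _ (by omega), iNE _ _ (by omega)] at Ev1
        omega
    · -- content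
      intro v hv
      rw [Ncnt_swap_out_hi hiM hjM]
      exact hz.cont v hv
  · -- measure decreases
    have hup : ∀ u m, cnt z u m ≤ cnt (swapW z i j) u m := by
      intro u m
      rcases le_or_gt m i with hmi | him
      · rw [cnt_swap_out_lo hmi hij]
      rcases Nat.lt_or_ge j m with hjm | hmj
      · rw [cnt_swap_out_hi (by omega) hjm]
      have e := cnt_swap_mid (w := z) hij him hmj u
      have i1 : ind z u i ≤ ind z u j := by
        unfold ind; split_ifs <;> omega
      omega
    have hstrict : cnt z (z j) (i+1) + 1 = cnt (swapW z i j) (z j) (i+1) := by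
      have e := cnt_swap_mid (w := z) (m := i+1) hij (by omega) (by omega) (z j)
      have i1 : ind z (z j) i = 0 := by unfold ind; rw [if_neg (by omega)]
      have i2 : ind z (z j) j = 1 := by unfold ind; rw [if_pos ⟨hd1, le_rfl⟩]
      omega
    unfold meas
    apply Finset.sum_lt_sum
    · intro u _
      apply Finset.sum_le_sum
      intro m _
      have := hup u m
      omega
    · refine ⟨z j, Finset.mem_range.2 (by have := hz.bdd j; omega), ?_⟩
      apply Finset.sum_lt_sum
      · intro m _
        have := hup (z j) m
        omega
      · refine ⟨i + 1, Finset.mem_range.2 (by omega), ?_⟩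
        have h1 := hstrict
        have h2 := hdom' (z j) (i+1)
        omega

lemma eq_of_meas_zero (B : Finset ℕ) (M : ℕ) (hBM : ∀ i ∈ B, i < M) (x z : ℕ → ℕ)
    (hx : Inv B M x x) (hz : Inv B M x z)
    (hdom : ∀ u m, cnt z u m ≤ cnt x u m) (h0 : meas M x z = 0) : z = x := by
  have hterm : ∀ u m, u ≤ M → m ≤ M → cnt z u m = cnt x u m := by
    intro u m hu hm
    have h1 := (Finset.sum_eq_zero_iff.1 h0) u (Finset.mem_range.2 (by omega))
    have h2 := (Finset.sum_eq_zero_iff.1 h1) m (Finset.mem_range.2 (by omega))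
    have := hdom u m
    omega
  funext t
  rcases Nat.lt_or_ge t M with htM | htM
  · have hind : ∀ u, u ≤ M → ind z u t = ind x u t := by
      intro u hu
      have h1 := hterm u (t+1) hu (by omega)
      have h2 := hterm u t hu (by omega)
      rw [cnt_succ, cnt_succ] at h1
      omega
    have hzb := hz.bdd t
    have hxb := hx.bdd t
    rcases Nat.eq_zero_or_pos (z t) with hz0 | hz1
    · have : t ∉ B := fun h => by have := (hz.supp t).2 h; omega
      have : ¬ 1 ≤ x t := fun h => this ((hx.supp t).1 h)
      omega
    rcases Nat.eq_zero_or_pos (x t) with hx0 | hx1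
    · have : t ∉ B := fun h => by have := (hx.supp t).2 h; omega
      have : ¬ 1 ≤ z t := fun h => this ((hz.supp t).1 h)
      omega
    have e1 : ind x (z t) t = 1 := by
      rw [← hind (z t) hzb]; unfold ind; rw [if_pos ⟨hz1, le_rfl⟩]
    have e2 : ind z (x t) t = 1 := by
      rw [hind (x t) hxb]; unfold ind; rw [if_pos ⟨hx1, le_rfl⟩]
    unfold ind at e1 e2
    split_ifs at e1 with h1 <;> split_ifs at e2 with h2 <;> omega
  · have h1 : t ∉ B := fun h => by have := hBM t h; omega
    have h2 : ¬ 1 ≤ z t := fun h => h1 ((hz.supp t).1 h)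
    have h3 : ¬ 1 ≤ x t := fun h => h1 ((hx.supp t).1 h)
    omega

theorem word_chain (B : Finset ℕ) (M : ℕ) (hBM : ∀ i ∈ B, i < M) (x : ℕ → ℕ)
    (hx : Inv B M x x) :
    ∀ (D : ℕ) (z : ℕ → ℕ), Inv B M x z → (∀ u m, cnt z u m ≤ cnt x u m) → meas M x z ≤ D →
    Relation.ReflTransGen
      (fun y w => Inv B M x y ∧ Inv B M x w ∧ (∀ u m, cnt w u m ≤ cnt x u m) ∧ UpStep y w)
      z x := by
  intro D
  induction D with
  | zero =>
      intro z hz hdom hm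
      have : z = x := eq_of_meas_zero B M hBM x z hx hz hdom (by omega)
      rw [this]
  | succ D ih =>
      intro z hz hdom hm
      by_cases hzx : z = x
      · rw [hzx]
      · obtain ⟨z', hz', hdom', hup, hlt⟩ :=
          word_step B M hBM x z hx.lat hz hx.supp hdom hzx
        exact Relation.ReflTransGen.head ⟨hz, hz', hdom', hup⟩
          (ih z' hz' hdom' (by omega))

lemma cnt_swapW_le {w : ℕ → ℕ} {i j : ℕ} (hij : i < j) (h1 : 1 ≤ w i) (h2 : w i ≤ w j)
    (u m : ℕ) : cnt (swapW w i j) u m ≤ cnt w u m := by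
  rcases le_or_gt m i with hmi | him
  · rw [cnt_swap_out_lo hmi hij]
  rcases lt_or_ge j m with hjm | hmj
  · rw [cnt_swap_out_hi (by omega) hjm]
  have e := cnt_swap_mid (w := w) hij him hmj u
  have hle : ind w u j ≤ ind w u i := by unfold ind; split_ifs <;> omega
  omega

end Stmt6W

-- ===== geometry layer =====
namespace Stmt6G

variable {α β γ : Partn}

lemma mem_cells (hvs : VertStrip β γ) {c : ℕ × ℕ} :
    c ∈ SkewCells β γ ↔ c.2 = γ.f c.1 ∧ β.f c.1 = γ.f c.1 + 1 := by
  unfold SkewCells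
  constructor
  · rintro ⟨h1, h2⟩
    have := hvs c.1
    omega
  · rintro ⟨h1, h2⟩
    exact ⟨by omega, by omega⟩

lemma col_strict (hsub : PartnSub γ β) (hrook : RookStrip β γ) {i i' : ℕ}
    (hii : i < i') (hb : β.f i = γ.f i + 1) (hb' : β.f i' = γ.f i' + 1) :
    γ.f i' < γ.f i := by
  rcases Nat.lt_or_ge (γ.f i') (γ.f i) with h | h
  · exact h
  exfalso
  have heq : γ.f i' = γ.f i := le_antisymm (γ.antitone' (le_of_lt hii)) h
  set jj := γ.f i with hjj
  obtain ⟨N3, hN3⟩ := γ.finite_supp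
  obtain ⟨N1, hN1⟩ := β.finite_supp
  have hSfin : {t | jj < γ.f t}.Finite := by
    apply Set.Finite.subset (Set.finite_Iio N3)
    intro t ht
    simp only [Set.mem_setOf_eq] at ht
    simp only [Set.mem_Iio]
    by_contra hcon
    rw [hN3 t (by omega)] at ht
    omega
  have hTfin : {t | jj < β.f t}.Finite := by
    apply Set.Finite.subset (Set.finite_Iio N1)
    intro t ht
    simp only [Set.mem_setOf_eq] at ht
    simp only [Set.mem_Iio]
    by_contra hcon
    rw [hN1 t (by omega)] at ht
    omega
  have hiS : i ∉ {t | jj < γ.f t} := by simp only [Set.mem_setOf_eq]; omega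
  have hi'S : i' ∉ {t | jj < γ.f t} := by simp only [Set.mem_setOf_eq]; omega
  have hi'ins : i ∉ insert i' {t | jj < γ.f t} := by
    simp only [Set.mem_insert_iff]
    push_neg
    exact ⟨by omega, hiS⟩
  have hsubT : insert i (insert i' {t | jj < γ.f t}) ⊆ {t | jj < β.f t} := by
    intro t ht
    simp only [Set.mem_insert_iff, Set.mem_setOf_eq] at ht ⊢
    rcases ht with rfl | rfl | ht
    · omega
    · omega
    · exact lt_of_lt_of_le ht (hsub t)
  have hc1 : (insert i' {t | jj < γ.f t}).ncard = {t | jj < γ.f t}.ncard + 1 :=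
    Set.ncard_insert_of_notMem hi'S hSfin
  have hc2 : (insert i (insert i' {t | jj < γ.f t})).ncard
      = (insert i' {t | jj < γ.f t}).ncard + 1 :=
    Set.ncard_insert_of_notMem hi'ins (Set.Finite.insert _ hSfin)
  have hc3 : (insert i (insert i' {t | jj < γ.f t})).ncard ≤ {t | jj < β.f t}.ncard :=
    Set.ncard_le_ncard hsubT hTfin
  have hhs := hrook.2 jj
  unfold ptranspose at hhs
  omega

open Stmt6W

def wd (F : SkFilling α β γ) : ℕ → ℕ := fun i => F.entry (i, γ.f i)

def Brows (β γ : Partn) (M : ℕ) : Finset ℕ :=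
  (Finset.range M).filter (fun i => β.f i = γ.f i + 1)

lemma box_lt {M : ℕ} (hMβ : ∀ i, M ≤ i → β.f i = 0) {i : ℕ}
    (hb : β.f i = γ.f i + 1) : i < M := by
  by_contra h
  rw [hMβ i (by omega)] at hb
  omega

lemma mem_B {M : ℕ} (hMβ : ∀ i, M ≤ i → β.f i = 0) {i : ℕ} :
    i ∈ Brows β γ M ↔ β.f i = γ.f i + 1 := by
  unfold Brows
  rw [Finset.mem_filter, Finset.mem_range]
  exact ⟨fun h => h.2, fun h => ⟨box_lt hMβ h, h⟩⟩

lemma wd_pos_iff (hvs : VertStrip β γ) (F : SkFilling α β γ) (i : ℕ) :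
    1 ≤ wd F i ↔ β.f i = γ.f i + 1 := by
  constructor
  · intro h
    by_contra hb
    have : (i, γ.f i) ∉ SkewCells β γ := by
      intro hc
      exact hb ((mem_cells hvs).1 hc).2
    have := F.zero_outside _ this
    unfold wd at h
    omega
  · intro hb
    exact F.pos_inside _ ((mem_cells hvs).2 ⟨rfl, hb⟩)

lemma pair_inj : Function.Injective (fun i : ℕ => (i, γ.f i)) := by
  intro a b h
  simpa using congrArg Prod.fst h

lemma Ncnt_eq_card (w : ℕ → ℕ) (v m : ℕ) :
    Ncnt w v m = ((Finset.range m).filter (fun i => w i = v)).card := by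
  unfold Ncnt indE
  rw [Finset.card_filter]

/-- Workhorse: counting cells in columns `≥ cc` with entry `v`. -/
lemma cellset_card (hvs : VertStrip β γ) (w : ℕ → ℕ) (e : ℕ × ℕ → ℕ)
    (hew : ∀ i, β.f i = γ.f i + 1 → e (i, γ.f i) = w i)
    (hws : ∀ i, 1 ≤ w i → β.f i = γ.f i + 1)
    {v : ℕ} (hv : 1 ≤ v) (cc m : ℕ)
    (hm : ∀ i, β.f i = γ.f i + 1 → (cc ≤ γ.f i ↔ i < m)) :
    Set.ncard {p ∈ SkewCells β γ | cc ≤ p.2 ∧ e p = v} = Ncnt w v m := by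
  have hset : {p ∈ SkewCells β γ | cc ≤ p.2 ∧ e p = v}
      = ↑(((Finset.range m).filter (fun i => w i = v)).image (fun i => (i, γ.f i))) := by
    ext p
    simp only [Set.mem_setOf_eq, Finset.coe_image, Set.mem_image, Finset.mem_coe,
      Finset.mem_filter, Finset.mem_range]
    constructor
    · rintro ⟨hc, hcc, hev⟩
      obtain ⟨h1, h2⟩ := (mem_cells hvs).1 hc
      refine ⟨p.1, ⟨?_, ?_⟩, ?_⟩
      · exact (hm p.1 h2).1 (by omega)
      · rw [← hew p.1 h2, ← hev]
        congr 1
        rw [← h1]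
      · rw [← h1]
    · rintro ⟨i, ⟨him, hwv⟩, rfl⟩
      have hb : β.f i = γ.f i + 1 := hws i (by omega)
      refine ⟨(mem_cells hvs).2 ⟨rfl, hb⟩, (hm i hb).2 him, ?_⟩
      rw [hew i hb, hwv]
  rw [hset, Set.ncard_coe_finset, Finset.card_image_of_injective _ pair_inj,
    Ncnt_eq_card]

lemma content_eq {M : ℕ} (hvs : VertStrip β γ) (hMβ : ∀ i, M ≤ i → β.f i = 0)
    (F : SkFilling α β γ) {v : ℕ} (hv : 1 ≤ v) :
    Ncnt (wd F) v M = α.f (v - 1) := by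
  rw [← F.content v hv]
  have h1 : {c ∈ SkewCells β γ | F.entry c = v}
      = {p ∈ SkewCells β γ | 0 ≤ p.2 ∧ F.entry p = v} := by
    ext p
    simp only [Set.mem_setOf_eq]
    constructor
    · rintro ⟨h1, h2⟩; exact ⟨h1, Nat.zero_le _, h2⟩
    · rintro ⟨h1, _, h2⟩; exact ⟨h1, h2⟩
  rw [h1, cellset_card hvs (wd F) F.entry (fun i _ => rfl)
    (fun i h => (wd_pos_iff hvs F i).1 h) hv 0 M
    (fun i hb => ⟨fun _ => box_lt hMβ hb, fun _ => Nat.zero_le _⟩)]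

lemma Ncnt_pos {w : ℕ → ℕ} {v m i : ℕ} (hi : i < m) (hw : w i = v) :
    1 ≤ Ncnt w v m := by
  rw [Ncnt_eq_card]
  apply Finset.card_pos.2
  exact ⟨i, Finset.mem_filter.2 ⟨Finset.mem_range.2 hi, hw⟩⟩

lemma val_bdd {M : ℕ} (hvs : VertStrip β γ) (hMβ : ∀ i, M ≤ i → β.f i = 0)
    (hMα : ∀ v, M ≤ v → α.f v = 0) (F : SkFilling α β γ) (i : ℕ) : wd F i ≤ M := by
  by_contra h
  push_neg at h
  have hv1 : 1 ≤ wd F i := by omega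
  have hb : β.f i = γ.f i + 1 := (wd_pos_iff hvs F i).1 hv1
  have hiM : i < M := box_lt hMβ hb
  have h1 : 1 ≤ Ncnt (wd F) (wd F i) M := Ncnt_pos hiM rfl
  rw [content_eq hvs hMβ F hv1] at h1
  rw [hMα (wd F i - 1) (by omega)] at h1
  omega

lemma lat_of_LRF (hsub : PartnSub γ β) (hrook : RookStrip β γ) {M : ℕ}
    (hMβ : ∀ i, M ≤ i → β.f i = 0) (F : SkFilling α β γ) (hF : IsLRF F) :
    Lat (wd F) := by
  intro v m h2v
  set T := (Finset.range M).filter (fun i => β.f i = γ.f i + 1 ∧ i < m) with hT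
  by_cases hne : T.Nonempty
  · set i0 := T.max' hne with hi0
    have hi0T : i0 ∈ T := T.max'_mem hne
    rw [hT, Finset.mem_filter, Finset.mem_range] at hi0T
    have hmax : ∀ t ∈ T, t ≤ i0 := fun t ht => T.le_max' t ht
    have hm : ∀ i, β.f i = γ.f i + 1 → (γ.f i0 ≤ γ.f i ↔ i < m) := by
      intro i hb
      constructor
      · intro hcc
        by_contra hcon
        have hii : i0 < i := by omega
        have := col_strict hsub hrook hii hi0T.2.1 hb
        omega
      · intro him
        have hiT : i ∈ T := by
          rw [hT, Finset.mem_filter, Finset.mem_range]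
          exact ⟨box_lt hMβ hb, hb, him⟩
        exact γ.antitone' (hmax i hiT)
    rw [← cellset_card (hrook.1) (wd F) F.entry (fun i _ => rfl)
        (fun i h => (wd_pos_iff hrook.1 F i).1 h) (by omega : 1 ≤ v) (γ.f i0) m hm,
      ← cellset_card (hrook.1) (wd F) F.entry (fun i _ => rfl)
        (fun i h => (wd_pos_iff hrook.1 F i).1 h) (by omega : 1 ≤ v - 1) (γ.f i0) m hm]
    exact hF.2.2 v (γ.f i0) h2v
  · have h0 : Ncnt (wd F) v m = 0 := by
      rw [Ncnt_eq_card]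
      rw [Finset.card_eq_zero]
      apply Finset.filter_eq_empty_iff.2
      intro i hi
      rw [Finset.mem_range] at hi
      intro hwv
      have hb : β.f i = γ.f i + 1 := (wd_pos_iff hrook.1 F i).1 (by omega)
      apply hne
      refine ⟨i, ?_⟩
      rw [hT, Finset.mem_filter, Finset.mem_range]
      exact ⟨box_lt hMβ hb, hb, hi⟩
    rw [h0]
    exact Nat.zero_le _

def entryOf (β γ : Partn) (w : ℕ → ℕ) : ℕ × ℕ → ℕ := fun c =>
  if c.2 = γ.f c.1 ∧ β.f c.1 = γ.f c.1 + 1 then w c.1 else 0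

lemma entryOf_box {w : ℕ → ℕ} {i : ℕ} (hb : β.f i = γ.f i + 1) :
    entryOf β γ w (i, γ.f i) = w i := by
  unfold entryOf
  rw [if_pos ⟨rfl, hb⟩]

/-- Build a filling from a word. -/
def mkF {M : ℕ} (hvs : VertStrip β γ) (hMβ : ∀ i, M ≤ i → β.f i = 0)
    (w : ℕ → ℕ) (hws : ∀ i, 1 ≤ w i ↔ β.f i = γ.f i + 1)
    (hcont : ∀ v, 1 ≤ v → Ncnt w v M = α.f (v - 1)) : SkFilling α β γ where
  entry := entryOf β γ w
  zero_outside := fun c hc => by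
    unfold entryOf
    rw [if_neg]
    intro h
    exact hc ((mem_cells hvs).2 h)
  pos_inside := fun c hc => by
    have h := (mem_cells hvs).1 hc
    unfold entryOf
    rw [if_pos h]
    exact (hws c.1).2 h.2
  content := fun v hv => by
    have h1 : {c ∈ SkewCells β γ | entryOf β γ w c = v}
        = {p ∈ SkewCells β γ | 0 ≤ p.2 ∧ entryOf β γ w p = v} := by
      ext p
      simp only [Set.mem_setOf_eq]
      exact ⟨fun ⟨h1, h2⟩ => ⟨h1, Nat.zero_le _, h2⟩, fun ⟨h1, _, h2⟩ => ⟨h1, h2⟩⟩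
    rw [h1, cellset_card hvs w (entryOf β γ w) (fun i hb => entryOf_box hb)
      (fun i h => (hws i).1 h) hv 0 M
      (fun i hb => ⟨fun _ => box_lt hMβ hb, fun _ => Nat.zero_le _⟩)]
    exact hcont v hv

lemma wd_mkF {M : ℕ} (hvs : VertStrip β γ) (hMβ : ∀ i, M ≤ i → β.f i = 0)
    (w : ℕ → ℕ) (hws : ∀ i, 1 ≤ w i ↔ β.f i = γ.f i + 1)
    (hcont : ∀ v, 1 ≤ v → Ncnt w v M = α.f (v - 1)) :
    wd (mkF hvs hMβ w hws hcont) = w := by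
  funext i
  show entryOf β γ w (i, γ.f i) = w i
  by_cases hb : β.f i = γ.f i + 1
  · exact entryOf_box hb
  · unfold entryOf
    rw [if_neg (by intro h; exact hb h.2)]
    have := hws i
    omega

lemma LRF_mkF (hsub : PartnSub γ β) (hrook : RookStrip β γ) {M : ℕ}
    (hMβ : ∀ i, M ≤ i → β.f i = 0)
    (w : ℕ → ℕ) (hws : ∀ i, 1 ≤ w i ↔ β.f i = γ.f i + 1)
    (hcont : ∀ v, 1 ≤ v → Ncnt w v M = α.f (v - 1))
    (hlat : Lat w) : IsLRF (mkF hrook.1 hMβ w hws hcont) := by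
  refine ⟨?_, ?_, ?_⟩
  · intro i j j' hc hc' hjj
    obtain ⟨h1, h2⟩ := (mem_cells hrook.1).1 hc
    obtain ⟨h1', h2'⟩ := (mem_cells hrook.1).1 hc'
    simp only at h1 h1' ⊢
    rw [show j = j' by omega]
  · intro i i' j hc hc' hii
    obtain ⟨h1, h2⟩ := (mem_cells hrook.1).1 hc
    obtain ⟨h1', h2'⟩ := (mem_cells hrook.1).1 hc'
    simp only at h1 h1'
    have := col_strict hsub hrook hii h2 h2'
    omega
  · intro u cc h2u
    set T := (Finset.range M).filter (fun i => β.f i = γ.f i + 1 ∧ cc ≤ γ.f i) with hT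
    have hEw : ∀ i, β.f i = γ.f i + 1 → (mkF hrook.1 hMβ w hws hcont).entry (i, γ.f i) = w i :=
      fun i hb => entryOf_box hb
    have hWs : ∀ i, 1 ≤ w i → β.f i = γ.f i + 1 := fun i h => (hws i).1 h
    by_cases hne : T.Nonempty
    · set i1 := T.max' hne with hi1
      have hi1T : i1 ∈ T := T.max'_mem hne
      rw [hT, Finset.mem_filter, Finset.mem_range] at hi1T
      have hmax : ∀ t ∈ T, t ≤ i1 := fun t ht => T.le_max' t ht
      have hm : ∀ i, β.f i = γ.f i + 1 → (cc ≤ γ.f i ↔ i < i1 + 1) := by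
        intro i hb
        constructor
        · intro hcc
          have hiT : i ∈ T := by
            rw [hT, Finset.mem_filter, Finset.mem_range]
            exact ⟨box_lt hMβ hb, hb, hcc⟩
          have := hmax i hiT
          omega
        · intro hi
          exact le_trans hi1T.2.2 (γ.antitone' (by omega))
      rw [cellset_card hrook.1 w _ hEw hWs (by omega : 1 ≤ u) cc (i1+1) hm,
        cellset_card hrook.1 w _ hEw hWs (by omega : 1 ≤ u - 1) cc (i1+1) hm]
      exact hlat u (i1+1) h2u
    · have hm : ∀ i, β.f i = γ.f i + 1 → (cc ≤ γ.f i ↔ i < 0) := by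
        intro i hb
        constructor
        · intro hcc
          exfalso
          apply hne
          refine ⟨i, ?_⟩
          rw [hT, Finset.mem_filter, Finset.mem_range]
          exact ⟨box_lt hMβ hb, hb, hcc⟩
        · intro h
          omega
      rw [cellset_card hrook.1 w _ hEw hWs (by omega : 1 ≤ u) cc 0 hm,
        cellset_card hrook.1 w _ hEw hWs (by omega : 1 ≤ u - 1) cc 0 hm]
      exact hlat u 0 h2u

lemma regionRow_eq (hvs : VertStrip β γ) (F : SkFilling α β γ) (u i : ℕ) :
    regionRow F u i = γ.f i + ind (wd F) u i := by
  unfold regionRow ind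
  by_cases hb : β.f i = γ.f i + 1
  · by_cases hle : wd F i ≤ u
    · have hset : {j | (i, j) ∈ SkewCells β γ ∧ F.entry (i, j) ≤ u} = {γ.f i} := by
        ext jj
        simp only [Set.mem_setOf_eq, Set.mem_singleton_iff]
        constructor
        · rintro ⟨h1, _⟩
          exact ((mem_cells hvs).1 h1).1
        · rintro rfl
          exact ⟨(mem_cells hvs).2 ⟨rfl, hb⟩, hle⟩
      rw [hset, Set.ncard_singleton, if_pos ⟨(wd_pos_iff hvs F i).2 hb, hle⟩]
    · have hset : {j | (i, j) ∈ SkewCells β γ ∧ F.entry (i, j) ≤ u} = ∅ := by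
        ext jj
        simp only [Set.mem_setOf_eq, Set.mem_empty_iff_false, iff_false, not_and]
        intro h1
        have := ((mem_cells hvs).1 h1).1
        simp only at this
        rw [this]
        exact fun h => hle h
      rw [hset, Set.ncard_empty, if_neg (by intro h; exact hle h.2)]
  · have hset : {j | (i, j) ∈ SkewCells β γ ∧ F.entry (i, j) ≤ u} = ∅ := by
      ext jj
      simp only [Set.mem_setOf_eq, Set.mem_empty_iff_false, iff_false, not_and]
      intro h1
      exact absurd ((mem_cells hvs).1 h1).2 hb
    have hw0 : wd F i = 0 := by
      have := wd_pos_iff hvs F i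
      omega
    rw [hset, Set.ncard_empty, if_neg (by omega)]

lemma sum_regionRow (hvs : VertStrip β γ) (F : SkFilling α β γ) (u m : ℕ) :
    ∑ i ∈ Finset.range m, regionRow F u i
      = (∑ i ∈ Finset.range m, γ.f i) + cnt (wd F) u m := by
  unfold cnt
  rw [← Finset.sum_add_distrib]
  exact Finset.sum_congr rfl fun i _ => regionRow_eq hvs F u i

lemma domle_iff (hvs : VertStrip β γ) (Z X : SkFilling α β γ) :
    DomLE Z X ↔ ∀ u m, cnt (wd Z) u m ≤ cnt (wd X) u m := by
  unfold DomLE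
  constructor
  · intro h u m
    have := h u m
    rw [sum_regionRow hvs Z u m, sum_regionRow hvs X u m] at this
    omega
  · intro h u m
    rw [sum_regionRow hvs Z u m, sum_regionRow hvs X u m]
    have := h u m
    omega

lemma sortswap_false (hsub : PartnSub γ β) (hrook : RookStrip β γ)
    {A B2 : ℕ × ℕ → ℕ} (h : SortSwap β γ A B2) : False := by
  obtain ⟨p, q, hp, hq, hor, hlt, _⟩ := h
  obtain ⟨hp1, hp2⟩ := (mem_cells hrook.1).1 hp
  obtain ⟨hq1, hq2⟩ := (mem_cells hrook.1).1 hq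
  rcases hor with ⟨hrow, hcol⟩ | ⟨hcol, hrow⟩
  · rw [hrow] at hp1
    omega
  · have := col_strict hsub hrook hrow hp2 hq2
    omega

lemma rtg_sortswap (hsub : PartnSub γ β) (hrook : RookStrip β γ)
    {a b : ℕ × ℕ → ℕ} (h : Relation.ReflTransGen (SortSwap β γ) a b) : a = b := by
  induction h with
  | refl => rfl
  | tail _ h2 ih => exact absurd h2 (fun hc => sortswap_false hsub hrook hc)

lemma eq_of_wd (hvs : VertStrip β γ) {F G : SkFilling α β γ} (h : wd F = wd G) : F = G := by
  have hent : F.entry = G.entry := by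
    funext c
    by_cases hc : c ∈ SkewCells β γ
    · obtain ⟨h1, _⟩ := (mem_cells hvs).1 hc
      have hc2 : (c.1, γ.f c.1) = c := by
        rw [← h1]
      calc F.entry c = wd F c.1 := by unfold wd; rw [hc2]
        _ = wd G c.1 := by rw [h]
        _ = G.entry c := by unfold wd; rw [hc2]
    · rw [F.zero_outside c hc, G.zero_outside c hc]
  cases F; cases G
  simp only at hent
  subst hent
  rfl

lemma boxmove_wd (hsub : PartnSub γ β) (hrook : RookStrip β γ)
    {W Y : SkFilling α β γ} (h : BoxMove W Y) :
    ∃ i j, i < j ∧ 1 ≤ wd W i ∧ wd W i < wd W j ∧ wd Y = swapW (wd W) i j := by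
  obtain ⟨p, q, hp, hq, hpq, hlt, hrtg⟩ := h
  have hYW : Function.update (Function.update W.entry p (W.entry q)) q (W.entry p)
      = Y.entry := rtg_sortswap hsub hrook hrtg
  obtain ⟨hp1, hp2⟩ := (mem_cells hrook.1).1 hp
  obtain ⟨hq1, hq2⟩ := (mem_cells hrook.1).1 hq
  have hpe : (p.1, γ.f p.1) = p := by rw [← hp1]
  have hqe : (q.1, γ.f q.1) = q := by rw [← hq1]
  have hwdp : wd W p.1 = W.entry p := by unfold wd; rw [hpe]
  have hwdq : wd W q.1 = W.entry q := by unfold wd; rw [hqe]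
  refine ⟨p.1, q.1, hpq, ?_, ?_, ?_⟩
  · rw [hwdp]; exact W.pos_inside p hp
  · rw [hwdp, hwdq]; exact hlt
  · funext t
    have hYt : wd Y t = Function.update (Function.update W.entry p (W.entry q)) q
        (W.entry p) (t, γ.f t) := by rw [hYW]; rfl
    rcases eq_or_ne t q.1 with rfl | htq
    · rw [hYt]
      rw [show ((q.1 : ℕ), γ.f q.1) = q from hqe]
      rw [Function.update_self]
      unfold swapW
      rw [Equiv.swap_apply_right]
      exact hwdp.symm
    rcases eq_or_ne t p.1 with rfl | htp
    · rw [hYt]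
      have hne1 : ((p.1 : ℕ), γ.f p.1) ≠ q := by
        rw [hpe]
        intro hc
        rw [hc] at hpq
        omega
      rw [Function.update_of_ne hne1, show ((p.1 : ℕ), γ.f p.1) = p from hpe,
        Function.update_self]
      unfold swapW
      rw [Equiv.swap_apply_left]
      exact hwdq.symm
    · rw [hYt]
      have hne1 : ((t : ℕ), γ.f t) ≠ q := by
        intro hc
        exact htq (by rw [← hc])
      have hne2 : ((t : ℕ), γ.f t) ≠ p := by
        intro hc
        exact htp (by rw [← hc])
      rw [Function.update_of_ne hne1, Function.update_of_ne hne2]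
      unfold swapW
      rw [Equiv.swap_apply_of_ne_of_ne htp htq]
      rfl

lemma boxmove_domle (hsub : PartnSub γ β) (hrook : RookStrip β γ)
    {W Y : SkFilling α β γ} (h : BoxMove W Y) : DomLE Y W := by
  obtain ⟨i, j, hij, h1, h2, hswap⟩ := boxmove_wd hsub hrook h
  rw [domle_iff hrook.1]
  intro u m
  rw [hswap]
  exact cnt_swapW_le hij h1 (le_of_lt h2) u m

lemma transfer (hsub : PartnSub γ β) (hrook : RookStrip β γ) {M : ℕ}
    (hMβ : ∀ i, M ≤ i → β.f i = 0)
    (X : SkFilling α β γ) (hX : IsLRF X)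
    (hacont : ∀ v, 1 ≤ v → Ncnt (wd X) v M = α.f (v - 1)) :
    ∀ (zw : ℕ → ℕ),
      Relation.ReflTransGen
        (fun y w => Inv (Brows β γ M) M (wd X) y ∧ Inv (Brows β γ M) M (wd X) w ∧
          (∀ u m, cnt w u m ≤ cnt (wd X) u m) ∧ UpStep y w)
        zw (wd X) →
      ∀ F : SkFilling α β γ, wd F = zw → IsLRF F → LeBox F X := by
  intro zw h
  induction h using Relation.ReflTransGen.head_induction_on with
  | refl =>
      intro F hF hLRF
      have : F = X := eq_of_wd hrook.1 hF
      rw [this]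
      exact Relation.ReflTransGen.refl
  | head hstep hrest ih =>
      rename_i aw bw
      intro F hF hLRF
      obtain ⟨hInva, hInvb, hdomb, i, j, hij, h1, h2, hswap⟩ := hstep
      subst hF
      -- build the filling for bw
      have hwsb : ∀ t, 1 ≤ bw t ↔ β.f t = γ.f t + 1 := by
        intro t
        rw [hInvb.supp t, mem_B hMβ]
      have hcontb : ∀ v, 1 ≤ v → Ncnt bw v M = α.f (v - 1) := by
        intro v hv
        rw [hInvb.cont v hv, hacont v hv]
      set G := mkF hrook.1 hMβ bw hwsb hcontb with hG
      have hwdG : wd G = bw := wd_mkF hrook.1 hMβ bw hwsb hcontb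
      have hGLRF : IsLRF G := LRF_mkF hsub hrook hMβ bw hwsb hcontb hInvb.lat
      -- the box move from G to F
      have hbox : BoxMove G F := by
        have hbi : β.f i = γ.f i + 1 := ((wd_pos_iff hrook.1 F i)).1 (by
          have := h2; have := h1; omega)
        have hbj : β.f j = γ.f j + 1 := ((wd_pos_iff hrook.1 F j)).1 h1
        have hpc : ((i : ℕ), γ.f i) ∈ SkewCells β γ := (mem_cells hrook.1).2 ⟨rfl, hbi⟩
        have hqc : ((j : ℕ), γ.f j) ∈ SkewCells β γ := (mem_cells hrook.1).2 ⟨rfl, hbj⟩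
        have hGi : G.entry (i, γ.f i) = wd F j := by
          show wd G i = wd F j
          rw [hwdG, hswap, swapW_left]
        have hGj : G.entry (j, γ.f j) = wd F i := by
          show wd G j = wd F i
          rw [hwdG, hswap, swapW_right]
        refine ⟨(i, γ.f i), (j, γ.f j), hpc, hqc, hij, ?_, ?_⟩
        · rw [hGi, hGj]; exact h2
        · have hupd : Function.update (Function.update G.entry (i, γ.f i)
              (G.entry (j, γ.f j))) (j, γ.f j) (G.entry (i, γ.f i)) = F.entry := by
            funext c
            rcases eq_or_ne c ((j : ℕ), γ.f j) with rfl | hcq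
            · rw [Function.update_self, hGi]
              show wd F j = F.entry (j, γ.f j)
              rfl
            rcases eq_or_ne c ((i : ℕ), γ.f i) with rfl | hcp
            · rw [Function.update_of_ne hcq, Function.update_self, hGj]
              show wd F i = F.entry (i, γ.f i)
              rfl
            · rw [Function.update_of_ne hcq, Function.update_of_ne hcp]
              by_cases hc : c ∈ SkewCells β γ
              · obtain ⟨hc1, _⟩ := (mem_cells hrook.1).1 hc
                have hce : ((c.1 : ℕ), γ.f c.1) = c := by rw [← hc1]
                have hti : c.1 ≠ i := by
                  intro hc2
                  apply hcp
                  rw [← hce, hc2]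
                have htj : c.1 ≠ j := by
                  intro hc2
                  apply hcq
                  rw [← hce, hc2]
                calc G.entry c = wd G c.1 := by show _ = G.entry _; rw [hce]
                  _ = wd F c.1 := by
                      rw [hwdG, hswap]
                      exact swapW_other (wd F) hti htj
                  _ = F.entry c := by show F.entry _ = _; rw [hce]
              · rw [G.zero_outside c hc, F.zero_outside c hc]
          rw [hupd]
      exact Relation.ReflTransGen.head ⟨hLRF, hGLRF, hbox⟩ (ih G hwdG hGLRF)

end Stmt6G


/-- main theorem: for a rook strip, the box order and the dominance
order on LR-fillings coincide. -/
theorem stmt6 (α β γ : Partn) (hsub : PartnSub γ β) (hrook : RookStrip β γ)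
    (X Z : SkFilling α β γ) (hX : IsLRF X) (hZ : IsLRF Z) :
    LeBox Z X ↔ DomLE Z X := by
  constructor
  · intro h
    have main : ∀ u m, ∑ i ∈ Finset.range m, regionRow Z u i
        ≤ ∑ i ∈ Finset.range m, regionRow X u i := by
      clear hX
      induction h with
      | refl => intro u m; exact le_rfl
      | tail _ h2 ih =>
          obtain ⟨_, _, hbm⟩ := h2
          have hd := Stmt6G.boxmove_domle hsub hrook hbm
          intro u m
          exact le_trans (ih u m) (hd u m)
    exact main
  · intro hdom
    obtain ⟨N1, hN1⟩ := β.finite_supp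
    obtain ⟨N2, hN2⟩ := α.finite_supp
    have hMβ : ∀ i, N1 + N2 ≤ i → β.f i = 0 := fun i hi => hN1 i (by omega)
    have hMα : ∀ v, N1 + N2 ≤ v → α.f v = 0 := fun v hv => hN2 v (by omega)
    set M := N1 + N2
    set B := Stmt6G.Brows β γ M with hB
    have hBM : ∀ i ∈ B, i < M := by
      intro i hi
      rw [hB] at hi
      unfold Stmt6G.Brows at hi
      exact Finset.mem_range.1 (Finset.mem_filter.1 hi).1
    have hsuppx : ∀ i, 1 ≤ Stmt6G.wd X i ↔ i ∈ B := fun i =>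
      (Stmt6G.wd_pos_iff hrook.1 X i).trans (Stmt6G.mem_B hMβ).symm
    have hsuppz : ∀ i, 1 ≤ Stmt6G.wd Z i ↔ i ∈ B := fun i =>
      (Stmt6G.wd_pos_iff hrook.1 Z i).trans (Stmt6G.mem_B hMβ).symm
    have hxInv : Stmt6W.Inv B M (Stmt6G.wd X) (Stmt6G.wd X) :=
      ⟨hsuppx, Stmt6G.val_bdd hrook.1 hMβ hMα X,
        Stmt6G.lat_of_LRF hsub hrook hMβ X hX, fun v _ => rfl⟩
    have hzInv : Stmt6W.Inv B M (Stmt6G.wd X) (Stmt6G.wd Z) :=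
      ⟨hsuppz, Stmt6G.val_bdd hrook.1 hMβ hMα Z,
        Stmt6G.lat_of_LRF hsub hrook hMβ Z hZ, fun v hv => by
          rw [Stmt6G.content_eq hrook.1 hMβ Z hv, Stmt6G.content_eq hrook.1 hMβ X hv]⟩
    have hdom' : ∀ u m, Stmt6W.cnt (Stmt6G.wd Z) u m ≤ Stmt6W.cnt (Stmt6G.wd X) u m :=
      (Stmt6G.domle_iff hrook.1 Z X).1 hdom
    have hchain := Stmt6W.word_chain B M hBM (Stmt6G.wd X) hxInv
      (Stmt6W.meas M (Stmt6G.wd X) (Stmt6G.wd Z)) (Stmt6G.wd Z) hzInv hdom' le_rfl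
    exact Stmt6G.transfer hsub hrook hMβ X hX
      (fun v hv => Stmt6G.content_eq hrook.1 hMβ X hv) (Stmt6G.wd Z) hchain Z rfl hZ
end
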